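/- arXiv:1407.7059 — 8 statements merged into one kernel-verified Lean document; each statement's English description precedes it below -/
import Mathlib

section
/- Let A be an n×n real matrix that is diagonalizable with nonnegative eigenvalues, and suppose the entrywise powers A^α (defined via A^α = S D^α S^{-1} for a diagonalization A = S D S^{-1}) satisfy: A^α is entrywise nonnegative for all α in the real interval [m, m+1] for some positive integer m. Then A^α is entrywise nonnegative for all real α ≥ m. -/
open Matrix

/-- The continuous power `A^α := S * D^α * S⁻¹` of a diagonalizable matrix
`A = S * diagonal d * S⁻¹` with nonnegative eigenvalues `d`. -/
noncomputable def contPow {n : ℕ} (S : Matrix (Fin n) (Fin n) ℝ) (d : Fin n → ℝ) (α : ℝ) :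
    Matrix (Fin n) (Fin n) ℝ :=
  S * Matrix.diagonal (fun i => d i ^ α) * S⁻¹

lemma contPow_succ {n : ℕ} (S : Matrix (Fin n) (Fin n) ℝ) (d : Fin n → ℝ)
    (hd : ∀ i, 0 ≤ d i) (hS : IsUnit S.det) (α : ℝ) (hα0 : α ≠ 0) (hα1 : α ≠ 1) :
    contPow S d α = (S * Matrix.diagonal d * S⁻¹) * contPow S d (α - 1) := by
  have hinv : S⁻¹ * S = 1 := Matrix.nonsing_inv_mul S hS
  have hfun : (fun i => d i * d i ^ (α - 1)) = fun i => d i ^ α := by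
    funext i
    rcases (hd i).eq_or_lt with h | h
    · rw [← h, zero_mul, Real.zero_rpow hα0]
    · rw [← Real.rpow_one_add' h.le (by simpa using hα0)]
      congr 1; ring
  have hdd : Matrix.diagonal d * Matrix.diagonal (fun i => d i ^ (α - 1))
      = Matrix.diagonal (fun i => d i ^ α) := by
    rw [Matrix.diagonal_mul_diagonal, hfun]
  unfold contPow
  rw [Matrix.mul_assoc (S * Matrix.diagonal d) S⁻¹,
    ← Matrix.mul_assoc S⁻¹ (S * Matrix.diagonal fun i => d i ^ (α - 1)) S⁻¹,
    ← Matrix.mul_assoc S⁻¹ S (Matrix.diagonal fun i => d i ^ (α - 1)),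
    hinv, Matrix.one_mul, ← Matrix.mul_assoc, Matrix.mul_assoc S (Matrix.diagonal d)
      (Matrix.diagonal fun i => d i ^ (α - 1)), hdd]

/-- If `A` is an entrywise nonnegative, diagonalizable matrix with nonnegative eigenvalues
and `A^α` is entrywise nonnegative for all `α ∈ [m, m+1]` (`m` a positive integer),
then `A^α` is entrywise nonnegative for all real `α ≥ m`. -/
theorem contPow_nonneg_of_nonneg_on_Icc {n : ℕ}
    (A S : Matrix (Fin n) (Fin n) ℝ) (d : Fin n → ℝ)
    (hA : ∀ i j, 0 ≤ A i j)
    (hd : ∀ i, 0 ≤ d i)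
    (hS : IsUnit S.det)
    (hdiag : A = S * Matrix.diagonal d * S⁻¹)
    (m : ℕ) (hm : 0 < m)
    (hIcc : ∀ α ∈ Set.Icc (m : ℝ) ((m : ℝ) + 1), ∀ i j, 0 ≤ contPow S d α i j) :
    ∀ α : ℝ, (m : ℝ) ≤ α → ∀ i j, 0 ≤ contPow S d α i j := by
  have hm1 : (1 : ℝ) ≤ (m : ℝ) := by exact_mod_cast hm
  have key : ∀ k : ℕ, ∀ α : ℝ, (m : ℝ) + k ≤ α → α ≤ (m : ℝ) + k + 1 →
      ∀ i j, 0 ≤ contPow S d α i j := by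
    intro k
    induction k with
    | zero => intro α h1 h2 i j; exact hIcc α ⟨by simpa using h1, by simpa using h2⟩ i j
    | succ k ih =>
      intro α h1 h2 i j
      have h1' : (m : ℝ) + k + 1 ≤ α := by push_cast at h1; linarith
      have h2' : α ≤ (m : ℝ) + k + 2 := by push_cast at h2; linarith
      have hk0 : (0 : ℝ) ≤ (k : ℝ) := Nat.cast_nonneg k
      have hα2 : (2 : ℝ) ≤ α := by linarith
      rw [contPow_succ S d hd hS α (by linarith) (by linarith), ← hdiag]
      have hprev : ∀ i j, 0 ≤ contPow S d (α - 1) i j :=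
        ih (α - 1) (by linarith) (by linarith)
      rw [Matrix.mul_apply]
      exact Finset.sum_nonneg fun l _ => mul_nonneg (hA i l) (hprev l j)
  intro α hα i j
  have h0 : (0 : ℝ) ≤ α - m := by linarith
  have hzk : ((⌊α - (m : ℝ)⌋.toNat : ℤ)) = ⌊α - (m : ℝ)⌋ :=
    Int.toNat_of_nonneg (Int.floor_nonneg.2 h0)
  have hcast : ((⌊α - (m : ℝ)⌋.toNat : ℕ) : ℝ) = ((⌊α - (m : ℝ)⌋ : ℤ) : ℝ) := by
    exact_mod_cast congrArg (fun z : ℤ => (z : ℝ)) hzk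
  have hfl : ((⌊α - (m : ℝ)⌋.toNat : ℕ) : ℝ) ≤ α - m := by
    rw [hcast]; exact Int.floor_le _
  have hfl2 : α - m < ((⌊α - (m : ℝ)⌋.toNat : ℕ) : ℝ) + 1 := by
    rw [hcast]; exact Int.lt_floor_add_one _
  exact key ⌊α - (m : ℝ)⌋.toNat α (by linarith) (by linarith) i j
end

section
/- For each n there exists a real number m(n) such that for every n×n entrywise nonnegative, diagonalizable real matrix A with nonnegative eigenvalues, the continuous power A^α is entrywise nonnegative (hence GDN) for all real α ≥ m(n). -/
open Matrix

/-- Derivative of a finite sum of exponentials. -/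
lemma hasDerivAt_expsum (E : Finset ℝ) (C e : ℝ → ℝ) (x : ℝ) :
    HasDerivAt (fun y => ∑ v ∈ E, C v * Real.exp (e v * y))
      (∑ v ∈ E, C v * (e v * Real.exp (e v * x))) x := by
  apply HasDerivAt.fun_sum
  intro v _
  have h1 : HasDerivAt (fun y : ℝ => e v * y) (e v) x := by
    simpa using (hasDerivAt_id x).const_mul (e v)
  simpa [mul_comm, mul_left_comm, mul_assoc] using h1.exp.const_mul (C v)

/-- An exponential polynomial with `m` (distinct-exponent) terms vanishing at `m`
distinct points has all coefficients zero. -/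
lemma expsum_eq_zero :
    ∀ (m : ℕ) (E : Finset ℝ) (C e : ℝ → ℝ), E.card = m → Set.InjOn e E →
    ∀ T : Finset ℝ, m ≤ T.card →
    (∀ x ∈ T, ∑ v ∈ E, C v * Real.exp (e v * x) = 0) →
    ∀ v ∈ E, C v = 0 := by
  intro m
  induction m with
  | zero =>
    intro E C e hE _ T _ _ v hv
    rw [Finset.card_eq_zero] at hE
    simp [hE] at hv
  | succ m ih =>
    intro E C e hE hinj T hT hzero
    have hEne : E.Nonempty := Finset.card_pos.mp (by omega)
    obtain ⟨v₀, hv₀⟩ := hEne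
    -- the function with shifted exponents
    set g : ℝ → ℝ := fun y => ∑ v ∈ E, C v * Real.exp ((e v - e v₀) * y) with hg
    have hgzero : ∀ x ∈ T, g x = 0 := by
      intro x hx
      have : g x = (∑ v ∈ E, C v * Real.exp (e v * x)) * Real.exp (-(e v₀ * x)) := by
        rw [Finset.sum_mul]
        refine Finset.sum_congr rfl fun v _ => ?_
        rw [mul_assoc, ← Real.exp_add]
        ring_nf
      rw [this, hzero x hx, zero_mul]
    -- the derivative of g
    set D : ℝ → ℝ := fun y => ∑ v ∈ E, C v * ((e v - e v₀) * Real.exp ((e v - e v₀) * y))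
      with hD
    have hgderiv : ∀ x, HasDerivAt g (D x) x := fun x =>
      hasDerivAt_expsum E C (fun v => e v - e v₀) x
    have hgcont : ContinuousOn g (Set.univ) :=
      (continuous_iff_continuousAt.mpr fun x => (hgderiv x).continuousAt).continuousOn
    -- pick m+1 of the zeros, sorted
    obtain ⟨T', hT'sub, hT'card⟩ := Finset.exists_subset_card_eq hT
    set σ : Fin (m+1) → ℝ := fun i => ((T'.orderIsoOfFin hT'card) i : ℝ) with hσ
    have hσmono : StrictMono σ := fun i j hij => by
      exact_mod_cast (T'.orderIsoOfFin hT'card).strictMono hij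
    have hσmem : ∀ i, σ i ∈ T := fun i => hT'sub (T'.orderIsoOfFin hT'card i).2
    -- Rolle points
    have hrolle : ∀ i : Fin m, ∃ c, c ∈ Set.Ioo (σ i.castSucc) (σ i.succ) ∧ D c = 0 := by
      intro i
      have hab : σ i.castSucc < σ i.succ := hσmono (Fin.castSucc_lt_succ : i.castSucc < i.succ)
      have hIcc : ContinuousOn g (Set.Icc (σ i.castSucc) (σ i.succ)) :=
        hgcont.mono (Set.subset_univ _)
      have hfI : g (σ i.castSucc) = g (σ i.succ) := by
        rw [hgzero _ (hσmem _), hgzero _ (hσmem _)]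
      obtain ⟨c, hc, hc0⟩ := exists_deriv_eq_zero hab hIcc hfI
      refine ⟨c, hc, ?_⟩
      rw [← (hgderiv c).deriv]
      exact hc0
    choose y hy1 hy2 using hrolle
    have hymono : StrictMono y := by
      intro i j hij
      have h1 : y i < σ i.succ := (hy1 i).2
      have h2 : σ j.castSucc < y j := (hy1 j).1
      have h3 : σ i.succ ≤ σ j.castSucc := by
        apply hσmono.monotone
        have : (i : ℕ) + 1 ≤ (j : ℕ) := hij
        simp [Fin.le_def, Fin.val_succ, Fin.coe_castSucc, this]
      linarith
    set T'' : Finset ℝ := Finset.image y Finset.univ with hT''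
    have hT''card : m ≤ T''.card := by
      rw [hT'', Finset.card_image_of_injective _ hymono.injective, Finset.card_univ,
        Fintype.card_fin]
    -- apply induction hypothesis to the erased set
    have herase : ∀ v ∈ E.erase v₀, C v * (e v - e v₀) = 0 := by
      apply ih (E.erase v₀) (fun v => C v * (e v - e v₀)) (fun v => e v - e v₀)
        (by rw [Finset.card_erase_of_mem hv₀, hE]; rfl)
        (fun a ha b hb hab => hinj (Finset.mem_of_mem_erase ha) (Finset.mem_of_mem_erase hb)
          (by linarith [sub_left_injective.eq_iff.mp hab]))
        T'' hT''card
      intro x hx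
      obtain ⟨i, _, rfl⟩ := Finset.mem_image.mp hx
      have hDx : D (y i) = 0 := hy2 i
      rw [hD] at hDx
      rw [← hDx, Finset.sum_erase_eq_sub hv₀]
      simp [mul_assoc, mul_comm, mul_left_comm]
    have hCerase : ∀ v ∈ E.erase v₀, C v = 0 := by
      intro v hv
      have hne : e v ≠ e v₀ := fun h =>
        (Finset.ne_of_mem_erase hv) (hinj (Finset.mem_of_mem_erase hv) hv₀ h)
      have := herase v hv
      rcases mul_eq_zero.mp this with h | h
      · exact h
      · exact absurd (by linarith : e v = e v₀) hne
    -- finally the v₀ coefficient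
    have hTne : T.Nonempty := Finset.card_pos.mp (by omega)
    obtain ⟨x₀, hx₀⟩ := hTne
    have h0 := hzero x₀ hx₀
    rw [← Finset.add_sum_erase _ _ hv₀] at h0
    rw [Finset.sum_eq_zero (fun v hv => by rw [hCerase v hv, zero_mul]), add_zero] at h0
    have hC0 : C v₀ = 0 := by
      rcases mul_eq_zero.mp h0 with h | h
      · exact h
      · exact absurd h (Real.exp_ne_zero _)
    intro v hv
    rcases Finset.eq_of_mem_of_notMem_erase hv with h
    by_cases hvv : v = v₀
    · rw [hvv]; exact hC0
    · exact hCerase v (Finset.mem_erase.mpr ⟨hvv, hv⟩)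

section Main

variable {n : ℕ} (S : Matrix (Fin n) (Fin n) ℝ) (d : Fin n → ℝ)

lemma mul_entry_nonneg {M N : Matrix (Fin n) (Fin n) ℝ} (hM : ∀ i j, 0 ≤ M i j)
    (hN : ∀ i j, 0 ≤ N i j) : ∀ i j, 0 ≤ (M * N) i j := by
  intro i j
  rw [Matrix.mul_apply]
  exact Finset.sum_nonneg fun k _ => mul_nonneg (hM i k) (hN k j)

lemma contPow_add_one (hd : ∀ i, 0 ≤ d i) (hS : IsUnit S.det) (t : ℝ) (ht : t + 1 ≠ 0) :
    contPow S d (t + 1) = (S * Matrix.diagonal d * S⁻¹) * contPow S d t := by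
  unfold contPow
  have hdiag : (Matrix.diagonal fun i => d i ^ (t + 1)) =
      Matrix.diagonal d * Matrix.diagonal (fun i => d i ^ t) := by
    have hfun : (fun i => d i ^ (t + 1)) = fun i => d i * d i ^ t := by
      funext i
      rw [Real.rpow_add_one' (hd i) ht]
      ring
    rw [hfun, Matrix.diagonal_mul_diagonal]
  rw [hdiag]
  have hinv : S⁻¹ * S = 1 := Matrix.nonsing_inv_mul S hS
  calc S * (Matrix.diagonal d * Matrix.diagonal fun i => d i ^ t) * S⁻¹
      = S * Matrix.diagonal d * ((S⁻¹ * S) * ((Matrix.diagonal fun i => d i ^ t) * S⁻¹)) := by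
        rw [hinv, one_mul]; noncomm_ring
    _ = S * Matrix.diagonal d * S⁻¹ * (S * (Matrix.diagonal fun i => d i ^ t) * S⁻¹) := by
        noncomm_ring

lemma contPow_nat_nonneg (hd : ∀ i, 0 ≤ d i) (hS : IsUnit S.det)
    (hA : ∀ i j, 0 ≤ (S * Matrix.diagonal d * S⁻¹) i j) (N : ℕ) :
    ∀ i j, 0 ≤ contPow S d (N : ℝ) i j := by
  induction N with
  | zero =>
    intro i j
    have h1 : (fun i => d i ^ ((0 : ℕ) : ℝ)) = fun _ => (1 : ℝ) := by
      funext i; simp [Real.rpow_zero]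
    unfold contPow
    rw [Nat.cast_zero] at *
    rw [show (fun i => d i ^ (0:ℝ)) = fun _ => (1:ℝ) from funext fun i => Real.rpow_zero _,
      Matrix.diagonal_one, mul_one, Matrix.mul_nonsing_inv S hS, Matrix.one_apply]
    split <;> norm_num
  | succ N ih =>
    intro i j
    have : ((N + 1 : ℕ) : ℝ) = (N : ℝ) + 1 := by push_cast; ring
    rw [this, contPow_add_one S d hd hS _ (by positivity)]
    exact mul_entry_nonneg hA ih i j

lemma contPow_entry_eq (hd : ∀ i, 0 ≤ d i) (i j : Fin n) (α : ℝ) (hα : α ≠ 0) :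
    contPow S d α i j =
      ∑ v ∈ (Finset.univ.image d).filter (fun v => 0 < v),
        (∑ k ∈ Finset.univ.filter (fun k => d k = v), S i k * S⁻¹ k j) *
          Real.exp (Real.log v * α) := by
  classical
  have h1 : contPow S d α i j = ∑ k, S i k * d k ^ α * S⁻¹ k j := by
    unfold contPow
    simp [Matrix.mul_apply, Matrix.diagonal_apply, ite_mul, zero_mul, mul_ite, mul_zero,
      Finset.sum_ite_eq, Finset.sum_ite_eq']
  rw [h1]
  rw [← Finset.sum_fiberwise_of_maps_to
    (fun k _ => Finset.mem_image_of_mem d (Finset.mem_univ k))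
    (fun k => S i k * d k ^ α * S⁻¹ k j)]
  rw [← Finset.sum_filter_of_ne (p := fun v => 0 < v)]
  · refine Finset.sum_congr rfl fun v hv => ?_
    have hvpos : 0 < v := (Finset.mem_filter.mp hv).2
    rw [Finset.sum_mul]
    refine Finset.sum_congr rfl fun k hk => ?_
    have hdk : d k = v := (Finset.mem_filter.mp hk).2
    rw [hdk, Real.rpow_def_of_pos hvpos]
    ring
  · intro v hv hne
    by_contra hvnpos
    apply hne
    apply Finset.sum_eq_zero
    intro k hk
    have hdk : d k = v := (Finset.mem_filter.mp hk).2
    obtain ⟨k₀, _, hk₀⟩ := Finset.mem_image.mp hv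
    have hv0 : v = 0 := le_antisymm (not_lt.mp hvnpos) (hk₀ ▸ hd k₀)
    rw [hdk, hv0, Real.zero_rpow hα]
    ring

end Main

/-- Existence of a critical exponent for GDN matrices: for each `n` there is `m(n) : ℝ` such
that for every `n × n` entrywise nonnegative, diagonalizable matrix with nonnegative
eigenvalues, all continuous powers `A^α` with `α ≥ m(n)` are entrywise nonnegative. -/
theorem exists_GDN_critical_exponent_bound (n : ℕ) :
    ∃ m : ℝ, ∀ (A S : Matrix (Fin n) (Fin n) ℝ) (d : Fin n → ℝ),
      (∀ i j, 0 ≤ A i j) →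
      (∀ i, 0 ≤ d i) →
      IsUnit S.det →
      A = S * Matrix.diagonal d * S⁻¹ →
      ∀ α : ℝ, m ≤ α → ∀ i j, 0 ≤ contPow S d α i j := by
  classical
  refine ⟨(n ^ 3 : ℕ) + 2, ?_⟩
  intro A S d hA hd hS hAeq α hα
  subst hAeq
  by_contra hcon
  push_neg at hcon
  obtain ⟨i₀, j₀, hneg⟩ := hcon
  have hn : 0 < n := Fin.pos i₀
  have hα2 : ((n ^ 3 : ℕ) : ℝ) + 2 ≤ α := hα
  -- descend by one repeatedly
  have descend : ∀ k : ℕ, (k : ℝ) ≤ α - 2 →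
      ¬ (∀ i j, 0 ≤ contPow S d (α - k) i j) := by
    intro k
    induction k with
    | zero =>
      intro _ h
      have := h i₀ j₀
      rw [Nat.cast_zero, sub_zero] at this
      exact absurd this (not_le.mpr hneg)
    | succ k ih =>
      intro hk hgood
      have hk' : ((k + 1 : ℕ) : ℝ) = (k : ℝ) + 1 := by push_cast; ring
      apply ih (by rw [hk'] at hk; linarith)
      intro i j
      have heq : α - (k : ℕ) = (α - ((k + 1 : ℕ) : ℝ)) + 1 := by rw [hk']; ring
      rw [heq, contPow_add_one S d hd hS _ (by rw [hk'] at hk ⊢; linarith)]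
      exact mul_entry_nonneg hA hgood i j
  -- a negative entry at each of the first n^3 shifted powers
  have hbad : ∀ k : ℕ, ∃ p : Fin n × Fin n,
      k < n ^ 3 → contPow S d (α - k) p.1 p.2 < 0 := by
    intro k
    by_cases hk : k < n ^ 3
    · have hkle : (k : ℝ) ≤ α - 2 := by
        have : (k : ℝ) ≤ ((n ^ 3 : ℕ) : ℝ) := by exact_mod_cast hk.le
        linarith
      have := descend k hkle
      push_neg at this
      obtain ⟨i, j, h⟩ := this
      exact ⟨(i, j), fun _ => h⟩
    · exact ⟨(i₀, j₀), fun h => absurd h hk⟩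
  choose φ hφ using hbad
  -- pigeonhole: one entry is negative at ≥ n of those points
  obtain ⟨p, -, hp⟩ := Finset.exists_le_card_fiber_of_mul_le_card_of_maps_to
    (f := φ) (s := Finset.range (n ^ 3)) (t := (Finset.univ : Finset (Fin n × Fin n)))
    (fun _ _ => Finset.mem_univ _) ⟨(i₀, j₀), Finset.mem_univ _⟩
    (by rw [Finset.card_univ, Finset.card_range, Fintype.card_prod, Fintype.card_fin]; ring_nf
        omega)
  set B : Finset ℕ := {x ∈ Finset.range (n ^ 3) | φ x = p} with hB
  set i : Fin n := p.1
  set j : Fin n := p.2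
  -- the entry as an exponential sum
  set E : Finset ℝ := (Finset.univ.image d).filter (fun v => 0 < v) with hE
  set C : ℝ → ℝ := fun v => ∑ k ∈ Finset.univ.filter (fun k => d k = v), S i k * S⁻¹ k j
    with hC
  set g : ℝ → ℝ := fun x => ∑ v ∈ E, C v * Real.exp (Real.log v * x) with hg
  have hgentry : ∀ x : ℝ, x ≠ 0 → contPow S d x i j = g x := fun x hx =>
    contPow_entry_eq S d hd i j x hx
  have hgcont : Continuous g := by
    apply continuous_finset_sum
    intro v _
    exact continuous_const.mul (Real.continuous_exp.comp (continuous_const.mul continuous_id))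
  have hEcard : E.card ≤ n := by
    calc E.card ≤ (Finset.univ.image d).card := Finset.card_filter_le _ _
      _ ≤ (Finset.univ : Finset (Fin n)).card := Finset.card_image_le
      _ = n := by rw [Finset.card_univ, Fintype.card_fin]
  -- negative values of g on B, and zeros just below them
  have hBneg : ∀ k ∈ B, g (α - k) < 0 := by
    intro k hk
    rw [hB, Finset.mem_filter] at hk
    obtain ⟨hkr, hkp⟩ := hk
    have hklt : k < n ^ 3 := Finset.mem_range.mp hkr
    have h := hφ k hklt
    rw [hkp] at h
    have hxne : α - k ≠ 0 := by
      have : (k : ℝ) ≤ ((n ^ 3 : ℕ) : ℝ) := by exact_mod_cast hklt.le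
      push_cast at this hα2 ⊢
      intro h0; rw [sub_eq_zero] at h0; rw [← h0] at this; linarith
    rw [← hgentry _ hxne]
    exact h
  have hzeros : ∀ k : ℕ, ∃ z : ℝ, k ∈ B →
      (α - k) - 1 < z ∧ z < α - k ∧ g z = 0 := by
    intro k
    by_cases hk : k ∈ B
    swap
    · exact ⟨0, fun h => absurd h hk⟩
    have hkr : k < n ^ 3 := Finset.mem_range.mp (Finset.mem_filter.mp hk).1
    set t : ℝ := α - k with hT
    have ht3 : (3 : ℝ) ≤ t := by
      have h1 : (k : ℝ) + 1 ≤ ((n ^ 3 : ℕ) : ℝ) := by exact_mod_cast hkr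
      push_cast at h1 hα2 ⊢
      rw [hT]; linarith
    have hgt : g t < 0 := hBneg k hk
    set F : ℤ := ⌊t⌋ with hF
    have hF1 : (1 : ℤ) ≤ F := by
      rw [hF, Int.le_floor]; push_cast; linarith
    have hFle : (F : ℝ) ≤ t := Int.floor_le t
    have hFgt : t - 1 < (F : ℝ) := Int.sub_one_lt_floor t
    -- g is nonnegative at the positive integer F
    have hgF : 0 ≤ g (F : ℝ) := by
      have hFne : (F : ℝ) ≠ 0 := by positivity
      rw [← hgentry _ hFne]
      have hcast : (F : ℝ) = ((F.toNat : ℕ) : ℝ) := by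
        have h0F : (0 : ℤ) ≤ F := by linarith
        exact_mod_cast congrArg (Int.cast : ℤ → ℝ) (Int.toNat_of_nonneg h0F).symm
      rw [hcast]
      exact contPow_nat_nonneg S d hd hS hA F.toNat i j
    -- IVT
    have hsub : Set.Icc (g t) (g (F : ℝ)) ⊆ g '' Set.Icc (F : ℝ) t :=
      intermediate_value_Icc' hFle hgcont.continuousOn
    obtain ⟨z, hzmem, hz0⟩ := hsub ⟨hgt.le, hgF⟩
    refine ⟨z, fun _ => ⟨?_, ?_, hz0⟩⟩
    · exact lt_of_lt_of_le hFgt hzmem.1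
    · rcases lt_or_eq_of_le hzmem.2 with h | h
      · exact h
      · rw [h] at hz0; rw [hz0] at hgt; exact absurd hgt (lt_irrefl 0)
  choose ζ hζ using hzeros
  -- the zeros are pairwise distinct
  have hζinj : Set.InjOn ζ B := by
    intro a ha b hb hab
    by_contra hne
    have key : ∀ x y : ℕ, x ∈ B → y ∈ B → x < y → ζ y < ζ x := by
      intro x y hx hy hxy
      obtain ⟨_, hx2, _⟩ := hζ x hx
      obtain ⟨hy1, _, _⟩ := hζ y hy
      have : (x : ℝ) + 1 ≤ (y : ℝ) := by exact_mod_cast hxy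
      linarith
    rcases lt_trichotomy a b with h | h | h
    · have := key a b ha hb h; rw [hab] at this; exact absurd this (lt_irrefl _)
    · exact hne h
    · have := key b a hb ha h; rw [hab] at this; exact absurd this (lt_irrefl _)
  set T : Finset ℝ := B.image ζ with hT
  have hTcard : E.card ≤ T.card := by
    rw [hT, Finset.card_image_of_injOn hζinj]
    exact le_trans hEcard hp
  have hTzero : ∀ x ∈ T, ∑ v ∈ E, C v * Real.exp (Real.log v * x) = 0 := by
    intro x hx
    obtain ⟨k, hk, rfl⟩ := Finset.mem_image.mp hx
    exact (hζ k hk).2.2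
  -- all coefficients vanish
  have hinjE : Set.InjOn Real.log E := by
    intro a ha b hb hab
    exact Real.log_injOn_pos (Set.mem_Ioi.mpr (Finset.mem_filter.mp ha).2)
      (Set.mem_Ioi.mpr (Finset.mem_filter.mp hb).2) hab
  have hC0 : ∀ v ∈ E, C v = 0 :=
    expsum_eq_zero E.card E C Real.log rfl hinjE T hTcard hTzero
  -- contradiction with negativity
  have hBne : B.Nonempty := Finset.card_pos.mp (by omega)
  obtain ⟨k₀, hk₀⟩ := hBne
  have h2 : (∑ v ∈ E, C v * Real.exp (Real.log v * (α - (k₀ : ℕ)))) < 0 := hBneg k₀ hk₀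
  rw [Finset.sum_eq_zero (fun v hv => by rw [hC0 v hv, zero_mul])] at h2
  exact absurd h2 (lt_irrefl 0)
end

section
/- Let A be an invertible GDN matrix and fix indices i ≠ j. If the entry function α ↦ (A^α)_{ij} is given by an exponential polynomial p (agreeing with A^α for α > 0 and with p(0) = 0 since A^0 = I), and p has at most w real roots counted with multiplicity, then the set T̄ = {α > 1 : (A^α)_{ij} < 0} has at most ⌊(w−1)/2⌋ connected components. -/
open Matrix Finset

private lemma entry_nonneg_pow {n : ℕ} {A : Matrix (Fin n) (Fin n) ℝ}
    (hA : ∀ i j, 0 ≤ A i j) : ∀ (k : ℕ) (i j : Fin n), 0 ≤ (A ^ k) i j := by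
  intro k
  induction k with
  | zero =>
    intro i j
    rw [pow_zero]
    by_cases h : i = j <;> simp [Matrix.one_apply, h]
  | succ k ih =>
    intro i j
    rw [pow_succ, Matrix.mul_apply]
    exact Finset.sum_nonneg fun l _ => mul_nonneg (ih i l) (hA l j)

private lemma contPow_nat {n : ℕ} (S : Matrix (Fin n) (Fin n) ℝ) (d : Fin n → ℝ)
    (hS : IsUnit S.det) (k : ℕ) :
    contPow S d (k : ℝ) = (S * Matrix.diagonal d * S⁻¹) ^ k := by
  have hdp : (Matrix.diagonal fun i => d i ^ ((k : ℕ) : ℝ)) = Matrix.diagonal d ^ k := by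
    rw [Matrix.diagonal_pow]
    have h : (fun i => d i ^ ((k : ℕ) : ℝ)) = d ^ k := by
      funext i
      rw [Pi.pow_apply]
      exact Real.rpow_natCast (d i) k
    rw [h]
  unfold contPow
  rw [hdp]
  clear hdp
  induction k with
  | zero => simp [Matrix.mul_nonsing_inv S hS]
  | succ k ih =>
    rw [pow_succ, pow_succ, ← ih]
    calc S * (Matrix.diagonal d ^ k * Matrix.diagonal d) * S⁻¹
        = S * Matrix.diagonal d ^ k * (S⁻¹ * (S * (Matrix.diagonal d * S⁻¹))) := by
          rw [Matrix.nonsing_inv_mul_cancel_left S _ hS]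
          simp only [Matrix.mul_assoc]
      _ = S * Matrix.diagonal d ^ k * S⁻¹ * (S * Matrix.diagonal d * S⁻¹) := by
          simp only [Matrix.mul_assoc]

private lemma exists_root_Ico {p : ℝ → ℝ} (hc : Continuous p) {u v : ℝ} (huv : u < v)
    (hu : 0 ≤ p u) (hv : p v < 0) : ∃ r, r ∈ Set.Ico u v ∧ p r = 0 := by
  obtain ⟨r, hr, hr0⟩ := intermediate_value_Icc' huv.le hc.continuousOn
    (Set.mem_Icc.mpr ⟨hv.le, hu⟩)
  refine ⟨r, ⟨hr.1, lt_of_le_of_ne hr.2 ?_⟩, hr0⟩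
  rintro rfl
  rw [hr0] at hv
  exact lt_irrefl 0 hv

private lemma exists_root_Ioc {p : ℝ → ℝ} (hc : Continuous p) {u v : ℝ} (huv : u < v)
    (hu : p u < 0) (hv : 0 ≤ p v) : ∃ r, r ∈ Set.Ioc u v ∧ p r = 0 := by
  obtain ⟨r, hr, hr0⟩ := intermediate_value_Icc huv.le hc.continuousOn
    (Set.mem_Icc.mpr ⟨hu.le, hv⟩)
  refine ⟨r, ⟨lt_of_le_of_ne hr.1 ?_, hr.2⟩, hr0⟩
  rintro rfl
  rw [hr0] at hu
  exact lt_irrefl 0 hu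

/-- Let `A` be an invertible GDN matrix (entrywise nonnegative, diagonalizable with positive
eigenvalues) and `i ≠ j`.  If the entry function `α ↦ (A^α)_{ij}` is given by an exponential
polynomial `p` (agreeing with `A^α` for `α > 0`, and `p 0 = 0` since `A^0 = I`), and `p`
has at most `w` real roots counted with multiplicity, then the set
`T̄ = {α > 1 : (A^α)_{ij} < 0}` has at most `⌊(w-1)/2⌋` connected components.
The component count is encoded by: any finite subset of `T̄` whose points lie in pairwise
distinct connected components of `T̄` has cardinality at most `⌊(w-1)/2⌋`. -/
theorem offDiag_negativity_components_le {n N : ℕ}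
    (A S : Matrix (Fin n) (Fin n) ℝ) (d : Fin n → ℝ)
    (hA : ∀ i j, 0 ≤ A i j)
    (hd : ∀ i, 0 < d i)
    (hS : IsUnit S.det)
    (hdiag : A = S * Matrix.diagonal d * S⁻¹)
    (i j : Fin n) (hij : i ≠ j)
    (p : ℝ → ℝ) (a b : Fin N → ℝ)
    (hexp : ∀ t : ℝ, p t = ∑ k, a k * Real.exp (b k * t))
    (hp0 : p 0 = 0)
    (hpA : ∀ α : ℝ, 0 < α → p α = contPow S d α i j)
    (w : ℕ)
    (hroots : ∀ (s : Finset ℝ) (m : ℝ → ℕ),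
      (∀ t ∈ s, 1 ≤ m t ∧ ∀ k < m t, iteratedDeriv k p t = 0) → ∑ t ∈ s, m t ≤ w) :
    ∀ s : Finset ℝ,
      (∀ x ∈ s, x ∈ {α : ℝ | 1 < α ∧ contPow S d α i j < 0}) →
      (∀ x ∈ s, ∀ y ∈ s, x ≠ y →
        ¬ (Set.uIcc x y ⊆ {α : ℝ | 1 < α ∧ contPow S d α i j < 0})) →
      s.card ≤ (w - 1) / 2 := by
  intro s hs hsep
  classical
  -- differentiability and continuity of `p`
  have hpdef : p = fun t => ∑ k, a k * Real.exp (b k * t) := funext hexp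
  have hdiff : Differentiable ℝ p := by
    rw [hpdef]
    apply Differentiable.fun_sum
    intro k _
    exact ((Real.differentiable_exp.comp (differentiable_id.const_mul (b k)))).const_mul (a k)
  have hcont : Continuous p := hdiff.continuous
  -- basic facts about members of `s`
  have hneg : ∀ x ∈ s, 1 < x ∧ p x < 0 := by
    intro x hx
    obtain ⟨h1, h2⟩ := hs x hx
    exact ⟨h1, by rw [hpA x (lt_trans one_pos h1)]; exact h2⟩
  rcases Nat.eq_zero_or_pos s.card with h0 | hpos
  · simp [h0]
  -- the ordered enumeration of `s`
  set e' : ℕ → ℝ := fun k => if h : k < s.card then s.orderEmbOfFin rfl ⟨k, h⟩ else 0 with he'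
  have hmem : ∀ k, k < s.card → e' k ∈ s := by
    intro k hk
    simp only [he', dif_pos hk]
    exact Finset.orderEmbOfFin_mem s rfl _
  have hlt : ∀ k l : ℕ, k < l → l < s.card → e' k < e' l := by
    intro k l hkl hl
    have hk : k < s.card := lt_trans hkl hl
    simp only [he', dif_pos hk, dif_pos hl]
    exact (s.orderEmbOfFin rfl).strictMono (Fin.mk_lt_mk.mpr hkl)
  have hle : ∀ k l : ℕ, k ≤ l → l < s.card → e' k ≤ e' l := by
    intro k l hkl hl
    rcases eq_or_lt_of_le hkl with rfl | h
    · exact le_refl _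
    · exact (hlt k l h hl).le
  have hone : ∀ k, k < s.card → 1 < e' k := fun k hk => (hneg _ (hmem k hk)).1
  have hpneg : ∀ k, k < s.card → p (e' k) < 0 := fun k hk => (hneg _ (hmem k hk)).2
  -- the multiplicity function
  set M : ℝ → ℕ := fun t => if deriv p t = 0 then 2 else 1 with hM
  have hM1 : ∀ t, 1 ≤ M t := by
    intro t
    simp only [hM]
    split <;> norm_num
  have hMcond : ∀ t, p t = 0 → ∀ k < M t, iteratedDeriv k p t = 0 := by
    intro t hpt k hk
    by_cases hdv : deriv p t = 0
    · simp only [hM, if_pos hdv] at hk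
      interval_cases k
      · simpa [iteratedDeriv_zero] using hpt
      · rw [iteratedDeriv_one]; exact hdv
    · simp only [hM, if_neg hdv] at hk
      interval_cases k
      simpa [iteratedDeriv_zero] using hpt
  -- two roots (with multiplicity) in each gap
  have gap : ∀ k : ℕ, ∃ F : Finset ℝ, k + 1 < s.card →
      (∀ t ∈ F, t ∈ Set.Ioo (e' k) (e' (k + 1)) ∧ p t = 0) ∧ 2 ≤ ∑ t ∈ F, M t := by
    intro k
    by_cases hk : k + 1 < s.card
    swap
    · exact ⟨∅, fun h => absurd h hk⟩
    have hkc : k < s.card := lt_trans (Nat.lt_succ_self k) hk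
    set x := e' k
    set y := e' (k + 1)
    have hxy : x < y := hlt k (k + 1) (Nat.lt_succ_self k) hk
    have hx1 : 1 < x := hone k hkc
    have hpx : p x < 0 := hpneg k hkc
    have hpy : p y < 0 := hpneg (k + 1) hk
    -- find a point `z` in the gap with `p z ≥ 0`
    have hnsub := hsep x (hmem k hkc) y (hmem (k + 1) hk) (ne_of_lt hxy)
    rw [Set.uIcc_of_le hxy.le] at hnsub
    obtain ⟨z, hz, hzT⟩ := Set.not_subset.mp hnsub
    have hz1 : 1 < z := lt_of_lt_of_le hx1 hz.1
    have hpz : 0 ≤ p z := by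
      rw [hpA z (lt_trans one_pos hz1)]
      by_contra hcon
      push_neg at hcon
      exact hzT ⟨hz1, hcon⟩
    have hzx : z ≠ x := by rintro rfl; exact absurd hpz (not_le.mpr hpx)
    have hzy : z ≠ y := by rintro rfl; exact absurd hpz (not_le.mpr hpy)
    have hzo : z ∈ Set.Ioo x y := ⟨lt_of_le_of_ne hz.1 (Ne.symm hzx), lt_of_le_of_ne hz.2 hzy⟩
    by_cases hposz : ∃ z' ∈ Set.Ioo x y, 0 < p z'
    · -- two distinct simple roots
      obtain ⟨z', hz'o, hz'p⟩ := hposz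
      obtain ⟨r1, hr1, hr1p⟩ := exists_root_Ioc hcont hz'o.1 hpx hz'p.le
      obtain ⟨r2, hr2, hr2p⟩ := exists_root_Ico hcont hz'o.2 hz'p.le hpy
      have hr1z : r1 ≠ z' := by rintro rfl; exact absurd hr1p (ne_of_gt hz'p)
      have hr2z : r2 ≠ z' := by rintro rfl; exact absurd hr2p (ne_of_gt hz'p)
      have hr1lt : r1 < z' := lt_of_le_of_ne hr1.2 hr1z
      have hr2gt : z' < r2 := lt_of_le_of_ne hr2.1 (Ne.symm hr2z)
      have hne : r1 ≠ r2 := ne_of_lt (lt_trans hr1lt hr2gt)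
      refine ⟨{r1, r2}, fun _ => ⟨?_, ?_⟩⟩
      · intro t ht
        rcases Finset.mem_insert.mp ht with rfl | ht
        · exact ⟨⟨hr1.1, lt_trans hr1lt (lt_trans hr2gt hr2.2)⟩, hr1p⟩
        · rw [Finset.mem_singleton] at ht
          subst ht
          exact ⟨⟨lt_trans hz'o.1 hr2gt, hr2.2⟩, hr2p⟩
      · rw [Finset.sum_pair hne]
        have := hM1 r1
        have := hM1 r2
        omega
    · -- a double root
      push_neg at hposz
      have hpz0 : p z = 0 := le_antisymm (hposz z hzo) hpz
      have hmax : IsLocalMax p z := by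
        have hnb : Set.Ioo x y ∈ nhds z := Ioo_mem_nhds hzo.1 hzo.2
        exact Filter.eventually_of_mem hnb fun t ht => by rw [hpz0]; exact hposz t ht
      have hdz : deriv p z = 0 := hmax.deriv_eq_zero
      refine ⟨{z}, fun _ => ⟨?_, ?_⟩⟩
      · intro t ht
        rw [Finset.mem_singleton] at ht
        subst ht
        exact ⟨hzo, hpz0⟩
      · rw [Finset.sum_singleton]
        simp [hM, hdz]
  choose F hF using gap
  -- the root `r1` between `1` and the first point of `s`
  have hp1 : 0 ≤ p 1 := by
    rw [hpA 1 one_pos]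
    have h1 : ((1 : ℕ) : ℝ) = (1 : ℝ) := by norm_num
    rw [← h1, contPow_nat S d hS 1, ← hdiag, pow_one]
    exact hA i j
  obtain ⟨r1, hr1, hr1p⟩ := exists_root_Ico hcont (hone 0 hpos) hp1 (hpneg 0 hpos)
  -- the root `rE` beyond the last point of `s`
  have hlast : s.card - 1 < s.card := Nat.sub_lt hpos one_pos
  set K : ℕ := ⌈e' (s.card - 1)⌉₊ + 1 with hK
  have hKgt : e' (s.card - 1) < (K : ℝ) := by
    calc e' (s.card - 1) ≤ (⌈e' (s.card - 1)⌉₊ : ℝ) := Nat.le_ceil _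
      _ < (K : ℝ) := by rw [hK]; push_cast; linarith
  have hpK : 0 ≤ p K := by
    have hKpos : (0 : ℝ) < (K : ℝ) := by
      have : 0 < e' (s.card - 1) := lt_trans one_pos (hone _ hlast)
      linarith
    rw [hpA K hKpos, contPow_nat S d hS K, ← hdiag]
    exact entry_nonneg_pow hA K i j
  obtain ⟨rE, hrE, hrEp⟩ := exists_root_Ioc hcont hKgt (hpneg _ hlast) hpK
  -- assemble all the roots
  set B : Finset ℝ := (Finset.range (s.card - 1)).biUnion F with hB
  have hBmem : ∀ t ∈ B, (e' 0 < t ∧ t < e' (s.card - 1)) ∧ p t = 0 := by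
    intro t ht
    obtain ⟨k, hk, htk⟩ := Finset.mem_biUnion.mp ht
    rw [Finset.mem_range] at hk
    have hk1 : k + 1 < s.card := by omega
    obtain ⟨hio, hp0'⟩ := (hF k hk1).1 t htk
    refine ⟨⟨lt_of_le_of_lt (hle 0 k (Nat.zero_le k) (by omega)) hio.1,
      lt_of_lt_of_le hio.2 (hle (k + 1) (s.card - 1) (by omega) hlast)⟩, hp0'⟩
  have hdisj : (↑(Finset.range (s.card - 1)) : Set ℕ).PairwiseDisjoint F := by
    intro k hk l hl hkl
    simp only [Finset.coe_range, Set.mem_Iio] at hk hl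
    have hk1 : k + 1 < s.card := by omega
    have hl1 : l + 1 < s.card := by omega
    rw [Function.onFun, Finset.disjoint_left]
    intro t htk htl
    have h1 := ((hF k hk1).1 t htk).1
    have h2 := ((hF l hl1).1 t htl).1
    rcases lt_or_gt_of_ne hkl with h | h
    · have : e' (k + 1) ≤ e' l := hle (k + 1) l h (by omega)
      exact absurd (lt_of_lt_of_le h1.2 this) (not_lt.mpr h2.1.le)
    · have : e' (l + 1) ≤ e' k := hle (l + 1) k h (by omega)
      exact absurd (lt_of_lt_of_le h2.2 this) (not_lt.mpr h1.1.le)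
  have hsumB : 2 * (s.card - 1) ≤ ∑ t ∈ B, M t := by
    rw [hB, Finset.sum_biUnion hdisj]
    calc 2 * (s.card - 1) = ∑ _k ∈ Finset.range (s.card - 1), 2 := by
          rw [Finset.sum_const, Finset.card_range, smul_eq_mul, mul_comm]
      _ ≤ ∑ k ∈ Finset.range (s.card - 1), ∑ t ∈ F k, M t := by
          apply Finset.sum_le_sum
          intro k hk
          rw [Finset.mem_range] at hk
          exact (hF k (by omega)).2
  -- auxiliary inequalities for distinctness
  have hr1lt : r1 < e' 0 := hr1.2
  have hr1ge : (1 : ℝ) ≤ r1 := hr1.1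
  have hrEgt : e' (s.card - 1) < rE := hrE.1
  have h0first : e' 0 ≤ e' (s.card - 1) := hle 0 (s.card - 1) (Nat.zero_le _) hlast
  set s' : Finset ℝ := insert 0 (insert r1 (insert rE B)) with hs'
  have h0nm : (0 : ℝ) ∉ insert r1 (insert rE B) := by
    intro h
    rcases Finset.mem_insert.mp h with h | h
    · linarith
    rcases Finset.mem_insert.mp h with h | h
    · have := hrEgt; have := hone 0 hpos; nlinarith [h ▸ hrEgt]
    · have := (hBmem 0 h).1.1; have := hone 0 hpos; linarith
  have hr1nm : r1 ∉ insert rE B := by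
    intro h
    rcases Finset.mem_insert.mp h with h | h
    · subst h; linarith
    · have := (hBmem r1 h).1.1; linarith
  have hrEnm : rE ∉ B := by
    intro h
    have := (hBmem rE h).1.2
    linarith
  have hcount : ∑ t ∈ s', M t ≤ w := by
    apply hroots
    intro t ht
    refine ⟨hM1 t, hMcond t ?_⟩
    rcases Finset.mem_insert.mp ht with rfl | ht
    · exact hp0
    rcases Finset.mem_insert.mp ht with rfl | ht
    · exact hr1p
    rcases Finset.mem_insert.mp ht with rfl | ht
    · exact hrEp
    · exact (hBmem t ht).2
  have hsum : 2 * (s.card - 1) + 3 ≤ ∑ t ∈ s', M t := by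
    rw [hs', Finset.sum_insert h0nm, Finset.sum_insert hr1nm, Finset.sum_insert hrEnm]
    have := hM1 0
    have := hM1 r1
    have := hM1 rE
    omega
  omega
end

section
/- Let A be an invertible GDN matrix and i a diagonal index. If the entry function α ↦ (A^α)_{ii} is an exponential polynomial p with at most w real roots counted with multiplicity, and w > 0, then the set {α > 1 : (A^α)_{ii} < 0} has at most ⌊w/2⌋ connected components. -/
open Matrix Finset

/-- Entries of powers of an entrywise-nonnegative matrix are nonnegative. -/
lemma pow_entry_nonneg {n : ℕ} (A : Matrix (Fin n) (Fin n) ℝ) (hA : ∀ i j, 0 ≤ A i j) (K : ℕ) :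
    ∀ i j, 0 ≤ (A ^ K) i j := by
  induction K with
  | zero => intro i j; rw [pow_zero, Matrix.one_apply]; split <;> norm_num
  | succ K ih =>
    intro i j
    rw [pow_succ, Matrix.mul_apply]
    exact Finset.sum_nonneg fun k _ => mul_nonneg (ih i k) (hA k j)

/-- At natural exponents, the continuous power is the ordinary matrix power. -/
lemma contPow_natCast {n : ℕ} (S : Matrix (Fin n) (Fin n) ℝ) (d : Fin n → ℝ)
    (hS : IsUnit S.det) (K : ℕ) :
    contPow S d (K : ℝ) = (S * Matrix.diagonal d * S⁻¹) ^ K := by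
  have hSS : S⁻¹ * S = 1 := Matrix.nonsing_inv_mul _ hS
  have key : ∀ m : ℕ, S * Matrix.diagonal (fun i => d i ^ m) * S⁻¹ =
      (S * Matrix.diagonal d * S⁻¹) ^ m := by
    intro m
    induction m with
    | zero => simp [Matrix.mul_nonsing_inv _ hS]
    | succ m ih =>
      have hD : Matrix.diagonal (fun i => d i ^ (m + 1)) =
          Matrix.diagonal (fun i => d i ^ m) * Matrix.diagonal d := by
        simp [Matrix.diagonal_mul_diagonal, pow_succ]
      rw [pow_succ, ← ih, hD]
      simp only [Matrix.mul_assoc]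
      rw [← Matrix.mul_assoc S⁻¹ S, hSS, Matrix.one_mul]
  unfold contPow
  have h1 : (fun i => d i ^ (K : ℝ)) = fun i => d i ^ K :=
    funext fun i => Real.rpow_natCast _ _
  rw [h1, key]

open scoped Classical in
/-- Multiplicity assignment: a root gets weight 2 if the derivative also vanishes. -/
noncomputable def mult (p : ℝ → ℝ) (t : ℝ) : ℕ := if deriv p t = 0 then 2 else 1

lemma mult_pos (p : ℝ → ℝ) (t : ℝ) : 1 ≤ mult p t := by
  unfold mult; split <;> omega

/-- Between two negative values with a nonnegative value in between, a differentiable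
function has roots of total multiplicity at least 2, strictly inside the interval. -/
lemma gap_lemma {p : ℝ → ℝ} (hc : Continuous p) (hdiff : Differentiable ℝ p) {a b : ℝ}
    (hab : a < b) (hpa : p a < 0) (hpb : p b < 0)
    (hz : ∃ z, a ≤ z ∧ z ≤ b ∧ 0 ≤ p z) :
    ∃ T : Finset ℝ, (∀ t ∈ T, a < t ∧ t < b ∧ p t = 0) ∧ 2 ≤ ∑ t ∈ T, mult p t := by
  obtain ⟨z, hz1, hz2, hz3⟩ := hz
  obtain ⟨z0, hz0mem, hz0max⟩ :=
    isCompact_Icc.exists_isMaxOn (Set.nonempty_Icc.2 hab.le) hc.continuousOn (s := Set.Icc a b)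
  have hz0 : 0 ≤ p z0 := le_trans hz3 (hz0max ⟨hz1, hz2⟩)
  have haz0 : a < z0 :=
    lt_of_le_of_ne hz0mem.1 (fun h => by rw [← h] at hz0; linarith)
  have hz0b : z0 < b :=
    lt_of_le_of_ne hz0mem.2 (fun h => by rw [h] at hz0; linarith)
  rcases eq_or_lt_of_le hz0 with h0 | h0
  · have hloc : IsLocalMax p z0 := hz0max.isLocalMax (Icc_mem_nhds haz0 hz0b)
    have hder : deriv p z0 = 0 := hloc.deriv_eq_zero
    refine ⟨{z0}, ?_, ?_⟩
    · intro t ht; simp only [Finset.mem_singleton] at ht; subst ht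
      exact ⟨haz0, hz0b, h0.symm⟩
    · simp [mult, hder]
  · have h1 : (0 : ℝ) ∈ Set.Icc (p a) (p z0) := ⟨hpa.le, h0.le⟩
    obtain ⟨u, hu, hpu⟩ := intermediate_value_Icc haz0.le hc.continuousOn h1
    have h2 : (0 : ℝ) ∈ Set.Icc (p b) (p z0) := ⟨hpb.le, h0.le⟩
    obtain ⟨v, hv, hpv⟩ := intermediate_value_Icc' hz0b.le hc.continuousOn h2
    have hau : a < u := lt_of_le_of_ne hu.1 (fun h => by rw [← h] at hpu; linarith)
    have huz : u < z0 := lt_of_le_of_ne hu.2 (fun h => by rw [h] at hpu; linarith)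
    have hzv : z0 < v := lt_of_le_of_ne hv.1 (fun h => by rw [← h] at hpv; linarith)
    have hvb : v < b := lt_of_le_of_ne hv.2 (fun h => by rw [h] at hpv; linarith)
    have huv : u ≠ v := ne_of_lt (huz.trans hzv)
    refine ⟨{u, v}, ?_, ?_⟩
    · intro t ht
      rcases Finset.mem_insert.1 ht with rfl | ht
      · exact ⟨hau, (huz.trans hzv).trans hvb, hpu⟩
      · rw [Finset.mem_singleton] at ht; subst ht
        exact ⟨hau.trans (huz.trans hzv), hvb, hpv⟩
    · rw [Finset.sum_pair huv]
      have h1 := mult_pos p u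
      have h2 := mult_pos p v
      omega

/-- Let `A` be an invertible GDN matrix and `i` a diagonal index.  If the entry function
`α ↦ (A^α)_{ii}` is an exponential polynomial `p` with at most `w > 0` real roots counted
with multiplicity, then `{α > 1 : (A^α)_{ii} < 0}` has at most `⌊w/2⌋` connected components.
The component count is encoded by: any finite subset of the negativity set whose points lie
in pairwise distinct connected components has cardinality at most `⌊w/2⌋`. -/
theorem diag_negativity_components_le {n N : ℕ}
    (A S : Matrix (Fin n) (Fin n) ℝ) (d : Fin n → ℝ)
    (hA : ∀ i j, 0 ≤ A i j)
    (hd : ∀ i, 0 < d i)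
    (hS : IsUnit S.det)
    (hdiag : A = S * Matrix.diagonal d * S⁻¹)
    (i : Fin n)
    (p : ℝ → ℝ) (a b : Fin N → ℝ)
    (hexp : ∀ t : ℝ, p t = ∑ k, a k * Real.exp (b k * t))
    (hp0 : p 0 = 1)
    (hpA : ∀ α : ℝ, 0 < α → p α = contPow S d α i i)
    (w : ℕ) (hw : 0 < w)
    (hroots : ∀ (s : Finset ℝ) (m : ℝ → ℕ),
      (∀ t ∈ s, 1 ≤ m t ∧ ∀ k < m t, iteratedDeriv k p t = 0) → ∑ t ∈ s, m t ≤ w) :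
    ∀ s : Finset ℝ,
      (∀ x ∈ s, x ∈ {α : ℝ | 1 < α ∧ contPow S d α i i < 0}) →
      (∀ x ∈ s, ∀ y ∈ s, x ≠ y →
        ¬ (Set.uIcc x y ⊆ {α : ℝ | 1 < α ∧ contPow S d α i i < 0})) →
      s.card ≤ w / 2 := by
  -- regularity of p
  have hpfun : p = fun t => ∑ k, a k * Real.exp (b k * t) := funext hexp
  have hdiff : Differentiable ℝ p := by
    rw [hpfun]; fun_prop
  have hcont : Continuous p := hdiff.continuous
  -- the key induction: roots below the max of s with total multiplicity ≥ 2·card - 1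
  have key : ∀ c : ℕ, ∀ s : Finset ℝ, s.card = c → ∀ B, B ∈ s → (∀ x ∈ s, x ≤ B) →
      (∀ x ∈ s, 1 < x ∧ p x < 0) →
      (∀ x ∈ s, ∀ y ∈ s, x < y → ∃ z, x ≤ z ∧ z ≤ y ∧ 0 ≤ p z) →
      ∃ T : Finset ℝ, (∀ t ∈ T, p t = 0 ∧ t < B) ∧ 2 * c - 1 ≤ ∑ t ∈ T, mult p t := by
    intro c
    induction c with
    | zero =>
      intro s hc B hB _ _ _
      exact absurd hB (by simp [Finset.card_eq_zero.1 hc])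
    | succ c ih =>
      intro s hc B hB hBmax hneg hsep
      rcases Nat.eq_zero_or_pos c with rfl | hcpos
      · -- one point: one root in (0, B)
        have hB1 := hneg B hB
        have h0B : (0 : ℝ) < B := lt_trans one_pos hB1.1
        have h1 : (0 : ℝ) ∈ Set.Icc (p B) (p 0) := ⟨hB1.2.le, by rw [hp0]; norm_num⟩
        obtain ⟨u, hu, hpu⟩ := intermediate_value_Icc' h0B.le hcont.continuousOn h1
        have huB : u < B := lt_of_le_of_ne hu.2 (fun h => by rw [h] at hpu; linarith [hB1.2])
        refine ⟨{u}, ?_, ?_⟩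
        · intro t ht; simp only [Finset.mem_singleton] at ht; subst ht; exact ⟨hpu, huB⟩
        · simpa using mult_pos p u
      · have hs' : (s.erase B).Nonempty := by
          rw [← Finset.card_pos, Finset.card_erase_of_mem hB, hc]; omega
        set B' := (s.erase B).max' hs' with hB'def
        have hB's : B' ∈ s.erase B := Finset.max'_mem _ _
        have hB'mem : B' ∈ s := Finset.mem_of_mem_erase hB's
        obtain ⟨T', hT'root, hT'sum⟩ := ih (s.erase B)
          (by rw [Finset.card_erase_of_mem hB, hc]; omega) B' hB's
          (fun x hx => Finset.le_max' _ x hx)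
          (fun x hx => hneg x (Finset.mem_of_mem_erase hx))
          (fun x hx y hy hxy =>
            hsep x (Finset.mem_of_mem_erase hx) y (Finset.mem_of_mem_erase hy) hxy)
        have hB'B : B' < B :=
          lt_of_le_of_ne (hBmax B' hB'mem) (Finset.ne_of_mem_erase hB's)
        obtain ⟨z, hz⟩ := hsep B' hB'mem B hB hB'B
        obtain ⟨T₂, hT₂root, hT₂sum⟩ :=
          gap_lemma hcont hdiff hB'B (hneg B' hB'mem).2 (hneg B hB).2 ⟨z, hz⟩
        have hdisj : Disjoint T' T₂ := Finset.disjoint_left.2 fun t ht ht₂ =>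
          absurd (hT'root t ht).2 (not_lt.2 (hT₂root t ht₂).1.le)
        refine ⟨T' ∪ T₂, ?_, ?_⟩
        · intro t ht
          rcases Finset.mem_union.1 ht with h | h
          · exact ⟨(hT'root t h).1, (hT'root t h).2.trans hB'B⟩
          · exact ⟨(hT₂root t h).2.2, (hT₂root t h).2.1⟩
        · rw [Finset.sum_union hdisj]; omega
  -- main argument
  intro s hs hsep
  rcases s.eq_empty_or_nonempty with rfl | hne
  · simp
  have hneg : ∀ x ∈ s, 1 < x ∧ p x < 0 := fun x hx =>
    ⟨(hs x hx).1, by rw [hpA x (lt_trans one_pos (hs x hx).1)]; exact (hs x hx).2⟩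
  have hsep' : ∀ x ∈ s, ∀ y ∈ s, x < y → ∃ z, x ≤ z ∧ z ≤ y ∧ 0 ≤ p z := by
    intro x hx y hy hxy
    have h := hsep x hx y hy (ne_of_lt hxy)
    rw [Set.not_subset] at h
    obtain ⟨z, hz1, hz2⟩ := h
    rw [Set.uIcc_of_le hxy.le] at hz1
    refine ⟨z, hz1.1, hz1.2, ?_⟩
    have h1z : 1 < z := lt_of_lt_of_le (hs x hx).1 hz1.1
    have hnn : ¬ (contPow S d z i i < 0) := fun hcon => hz2 ⟨h1z, hcon⟩
    rw [hpA z (lt_trans one_pos h1z)]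
    linarith [not_lt.1 hnn]
  set B := s.max' hne with hBdef
  have hBmem : B ∈ s := s.max'_mem hne
  obtain ⟨T, hTroot, hTsum⟩ := key s.card s rfl B hBmem (fun x hx => s.le_max' x hx) hneg hsep'
  -- one more root to the right of B
  set K : ℕ := ⌊B⌋₊ + 1 with hKdef
  have hBK : B < (K : ℝ) := by
    have := Nat.lt_floor_add_one B
    push_cast [hKdef]
    linarith
  have hKpos : (0 : ℝ) < (K : ℝ) := lt_trans (lt_trans one_pos (hneg B hBmem).1) hBK
  have hpK : 0 ≤ p K := by
    rw [hpA K hKpos, contPow_natCast S d hS K, ← hdiag]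
    exact pow_entry_nonneg A hA K i i
  have hpB : p B < 0 := (hneg B hBmem).2
  have h0 : (0 : ℝ) ∈ Set.Icc (p B) (p K) := ⟨hpB.le, hpK⟩
  obtain ⟨u, hu, hpu⟩ := intermediate_value_Icc hBK.le hcont.continuousOn h0
  have hBu : B < u := lt_of_le_of_ne hu.1 (fun h => by rw [← h] at hpu; linarith)
  have huT : u ∉ T := fun h => absurd (hTroot u h).2 (not_lt.2 hBu.le)
  have hgood : ∀ t ∈ insert u T, 1 ≤ mult p t ∧ ∀ k < mult p t, iteratedDeriv k p t = 0 := by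
    intro t ht
    have hpt : p t = 0 := by
      rcases Finset.mem_insert.1 ht with rfl | h
      · exact hpu
      · exact (hTroot t h).1
    refine ⟨mult_pos p t, ?_⟩
    intro k hk
    have hm : mult p t = if deriv p t = 0 then 2 else 1 := rfl
    by_cases hdt : deriv p t = 0
    · rw [hm, if_pos hdt] at hk
      interval_cases k
      · simpa [iteratedDeriv_zero] using hpt
      · simpa [iteratedDeriv_one] using hdt
    · rw [hm, if_neg hdt] at hk
      interval_cases k
      simpa [iteratedDeriv_zero] using hpt
  have hfinal := hroots (insert u T) (mult p) hgood
  rw [Finset.sum_insert huT] at hfinal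
  have hc1 : 1 ≤ s.card := Finset.card_pos.2 hne
  have hmu := mult_pos p u
  omega
end

section
/- Let A be an n×n entrywise nonnegative real matrix (n ≥ 2) all of whose eigenvalues are real and positive. Then A has at least two positive diagonal entries. -/
open Matrix Polynomial

/-- The `(n-2)`-coefficient of `∏ (X - C (f i))` over all of `Fin n`. -/
lemma aux_prod_coeff {n : ℕ} (hn : 2 ≤ n) (f : Fin n → ℝ) :
    (∏ i, (X - C (f i))).coeff (n - 2) =
      ∑ t ∈ Finset.powersetCard 2 (Finset.univ : Finset (Fin n)), ∏ i ∈ t, (- f i) := by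
  have h : (∏ i, (X - C (f i))) = ∏ i, (X + C ((fun i => - f i) i)) := by
    refine Finset.prod_congr rfl fun i _ => ?_
    simp [sub_eq_add_neg]
  have hcard : (Finset.univ : Finset (Fin n)).card = n := by
    simp
  rw [h, Finset.prod_X_add_C_coeff _ _ (by rw [hcard]; omega), hcard]
  have h2 : n - (n - 2) = 2 := by omega
  rw [h2]

/-- If the products of distinct diagonal entries vanish and all entries are nonnegative,
then the `(n-2)`-coefficient of the characteristic polynomial is nonpositive. -/
lemma aux_coeff_nonpos {n : ℕ} (hn : 2 ≤ n) (A : Matrix (Fin n) (Fin n) ℝ)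
    (hA : ∀ i j, 0 ≤ A i j)
    (h1 : ∀ i j : Fin n, i ≠ j → A i i * A j j = 0) :
    A.charpoly.coeff (n - 2) ≤ 0 := by
  rw [Matrix.charpoly, Matrix.det_apply']
  rw [Polynomial.finset_sum_coeff]
  refine Finset.sum_nonpos fun σ _ => ?_
  -- rewrite the sign as C of a real number
  have hsign : ((Equiv.Perm.sign σ : ℤ) : ℝ[X]) = C ((Equiv.Perm.sign σ : ℤ) : ℝ) := by
    rfl
  rw [hsign, Polynomial.coeff_C_mul]
  -- split the product over the support
  set s : Finset (Fin n) := σ.support with hs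
  have hprod : (∏ i, charmatrix A (σ i) i) =
      (∏ i ∈ sᶜ, (X - C (A i i))) * C (∏ i ∈ s, (- A (σ i) i)) := by
    rw [← Finset.prod_compl_mul_prod s (f := fun i => charmatrix A (σ i) i)]
    congr 1
    · refine Finset.prod_congr rfl fun i hi => ?_
      have hfix : σ i = i := by
        simpa [hs, Equiv.Perm.mem_support] using (Finset.mem_compl.mp hi)
      rw [hfix, charmatrix_apply_eq]
    · rw [map_prod]
      refine Finset.prod_congr rfl fun i hi => ?_
      have hne : σ i ≠ i := by simpa [hs, Equiv.Perm.mem_support] using hi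
      rw [charmatrix_apply_ne _ _ _ hne, map_neg]
  rw [hprod]
  -- case on the cardinality of the support
  rcases Nat.lt_or_ge s.card 3 with hcard | hcard
  · interval_cases h : s.card
    · -- σ = 1
      have hσ : σ = 1 := by
        rw [← Equiv.Perm.support_eq_empty_iff, ← Finset.card_eq_zero, ← hs, h]
      subst hσ
      have hsc : sᶜ = (Finset.univ : Finset (Fin n)) := by
        simp [hs]
      have hse : s = (∅ : Finset (Fin n)) := by simp [hs]
      rw [hsc, hse]
      simp only [Finset.prod_empty, Polynomial.C_1, mul_one, Equiv.Perm.sign_one]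
      have := aux_prod_coeff hn (fun i => A i i)
      rw [this]
      have hzero : ∀ t ∈ Finset.powersetCard 2 (Finset.univ : Finset (Fin n)),
          ∏ i ∈ t, (- A i i) = 0 := by
        intro t ht
        have htc : t.card = 2 := (Finset.mem_powersetCard.mp ht).2
        obtain ⟨x, y, hxy, rfl⟩ := Finset.card_eq_two.mp htc
        rw [Finset.prod_pair hxy, neg_mul_neg, h1 x y hxy]
      rw [Finset.sum_eq_zero hzero]
      simp
    · exact absurd h (Equiv.Perm.card_support_ne_one σ)
    · -- σ is a swap
      obtain ⟨a, b, hab, rfl⟩ := Equiv.Perm.card_support_eq_two.mp h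
      have hsupp : s = {a, b} := by rw [hs, Equiv.Perm.support_swap hab]
      -- the constant factor
      have hconst : (∏ i ∈ s, (- A ((Equiv.swap a b) i) i)) = A b a * A a b := by
        rw [hsupp, Finset.prod_pair hab]
        rw [Equiv.swap_apply_left, Equiv.swap_apply_right, neg_mul_neg]
      -- the monic factor has degree n - 2 and top coefficient 1
      have hmonic : (∏ i ∈ sᶜ, (X - C (A i i))).Monic :=
        monic_prod_of_monic _ _ fun i _ => monic_X_sub_C _
      have hdeg : (∏ i ∈ sᶜ, (X - C (A i i))).natDegree = n - 2 := by
        rw [Polynomial.natDegree_prod _ _ (fun i _ => X_sub_C_ne_zero _)]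
        simp only [natDegree_X_sub_C, Finset.sum_const, smul_eq_mul, mul_one]
        rw [Finset.card_compl, hsupp, Finset.card_pair hab]
        simp
      have hcoeff : (∏ i ∈ sᶜ, (X - C (A i i))).coeff (n - 2) = 1 := by
        rw [← hdeg]; exact hmonic.coeff_natDegree
      rw [Polynomial.coeff_mul_C, hcoeff, one_mul, hconst]
      rw [Equiv.Perm.sign_swap hab]
      have : (0:ℝ) ≤ A b a * A a b := mul_nonneg (hA b a) (hA a b)
      simpa using neg_nonpos.mpr this
  · -- degree too small
    have hdegle : ((∏ i ∈ sᶜ, (X - C (A i i))) * C (∏ i ∈ s, (- A (σ i) i))).natDegree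
        ≤ n - 3 := by
      refine le_trans (natDegree_mul_le) ?_
      rw [natDegree_C, add_zero]
      refine le_trans (natDegree_prod_le _ _) ?_
      simp only [natDegree_X_sub_C, Finset.sum_const, smul_eq_mul, mul_one]
      rw [Finset.card_compl, Fintype.card_fin]
      omega
    have hn3 : n ≥ 3 := by
      have := Finset.card_le_univ s
      simp only [Finset.card_univ, Fintype.card_fin] at this
      omega
    rw [Polynomial.coeff_eq_zero_of_natDegree_lt (lt_of_le_of_lt hdegle (by omega))]
    simp

/-- An `n × n` entrywise nonnegative matrix (`n ≥ 2`) all of whose eigenvalues are real and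
positive (its characteristic polynomial splits over `ℝ` with positive roots) has at least
two positive diagonal entries. -/
theorem two_positive_diagonal_entries {n : ℕ} (hn : 2 ≤ n)
    (A : Matrix (Fin n) (Fin n) ℝ)
    (hA : ∀ i j, 0 ≤ A i j)
    (e : Fin n → ℝ) (he : ∀ i, 0 < e i)
    (hchar : Matrix.charpoly A = ∏ i, (X - C (e i))) :
    ∃ i j : Fin n, i ≠ j ∧ 0 < A i i ∧ 0 < A j j := by
  by_contra hcon
  push_neg at hcon
  have h1 : ∀ i j : Fin n, i ≠ j → A i i * A j j = 0 := by
    intro i j hij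
    rcases (hA i i).lt_or_eq with hi | hi
    · rcases (hA j j).lt_or_eq with hj | hj
      · exact absurd (hcon i j hij hi) (not_le.mpr hj)
      · rw [← hj, mul_zero]
    · rw [← hi, zero_mul]
  have hle : A.charpoly.coeff (n - 2) ≤ 0 := aux_coeff_nonpos hn A hA h1
  have hpos : 0 < A.charpoly.coeff (n - 2) := by
    rw [hchar, aux_prod_coeff hn e]
    refine Finset.sum_pos ?_ ?_
    · intro t ht
      have htc : t.card = 2 := (Finset.mem_powersetCard.mp ht).2
      obtain ⟨x, y, hxy, rfl⟩ := Finset.card_eq_two.mp htc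
      rw [Finset.prod_pair hxy, neg_mul_neg]
      exact mul_pos (he x) (he y)
    · refine Finset.powersetCard_nonempty.mpr ?_
      simp only [Finset.card_univ, Fintype.card_fin]
      exact hn
  exact absurd hle (not_le.mpr hpos)
end

section
/- Every irreducible n×n GDN matrix (n ≥ 2, with all eigenvalues positive) has index of primitivity at most 2n − 3. -/
open Matrix

/-- A nonnegative matrix is irreducible when its directed graph is strongly connected,
equivalently each pair of indices is joined by a positive entry of some positive power. -/
def MatIrreducible {n : ℕ} (A : Matrix (Fin n) (Fin n) ℝ) : Prop :=
  ∀ i j : Fin n, ∃ k : ℕ, 0 < k ∧ 0 < (A ^ k) i j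

namespace GDNaux

variable {n : ℕ}

/-- A walk of length `k` in the digraph of `A`. -/
def IsWalk (A : Matrix (Fin n) (Fin n) ℝ) (f : ℕ → Fin n) (k : ℕ) : Prop :=
  ∀ t < k, 0 < A (f t) (f (t + 1))

lemma pow_entry_nonneg {A : Matrix (Fin n) (Fin n) ℝ} (hA : ∀ i j, 0 ≤ A i j) :
    ∀ (k : ℕ) (i j : Fin n), 0 ≤ (A ^ k) i j := by
  intro k
  induction k with
  | zero =>
    intro i j
    by_cases h : i = j <;> simp [Matrix.one_apply, h]
  | succ k ih =>
    intro i j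
    rw [pow_succ, Matrix.mul_apply]
    exact Finset.sum_nonneg fun m _ => mul_nonneg (ih i m) (hA m j)

lemma compose {A : Matrix (Fin n) (Fin n) ℝ} (hA : ∀ i j, 0 ≤ A i j)
    {a b : ℕ} {i w j : Fin n} (h1 : 0 < (A ^ a) i w) (h2 : 0 < (A ^ b) w j) :
    0 < (A ^ (a + b)) i j := by
  rw [pow_add, Matrix.mul_apply]
  exact Finset.sum_pos'
    (fun m _ => mul_nonneg (pow_entry_nonneg hA a i m) (pow_entry_nonneg hA b m j))
    ⟨w, Finset.mem_univ w, mul_pos h1 h2⟩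

lemma walk_to_pow {A : Matrix (Fin n) (Fin n) ℝ} (hA : ∀ i j, 0 ≤ A i j)
    {f : ℕ → Fin n} : ∀ {k : ℕ}, IsWalk A f k → 0 < (A ^ k) (f 0) (f k) := by
  intro k
  induction k with
  | zero => intro _; simp [Matrix.one_apply]
  | succ k ih =>
    intro h
    have h1 : 0 < (A ^ k) (f 0) (f k) := ih (fun t ht => h t (by omega))
    have h2 : 0 < (A ^ 1) (f k) (f (k + 1)) := by
      rw [pow_one]; exact h k (by omega)
    exact compose hA h1 h2

lemma loop_pow {A : Matrix (Fin n) (Fin n) ℝ} (hA : ∀ i j, 0 ≤ A i j)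
    {w : Fin n} (h : 0 < A w w) : ∀ m : ℕ, 0 < (A ^ m) w w := by
  intro m
  induction m with
  | zero => simp [Matrix.one_apply]
  | succ m ih =>
    have h1 : 0 < (A ^ 1) w w := by rwa [pow_one]
    exact compose hA ih h1

lemma pow_to_walk {A : Matrix (Fin n) (Fin n) ℝ} (hA : ∀ i j, 0 ≤ A i j) :
    ∀ {k : ℕ} {i j : Fin n}, 0 < (A ^ k) i j →
      ∃ f : ℕ → Fin n, f 0 = i ∧ f k = j ∧ IsWalk A f k := by
  intro k
  induction k with
  | zero =>
    intro i j h
    rw [pow_zero] at h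
    have hij : i = j := by
      by_contra hne
      rw [Matrix.one_apply_ne hne] at h
      exact lt_irrefl 0 h
    exact ⟨fun _ => i, rfl, hij ▸ rfl, fun t ht => absurd ht (Nat.not_lt_zero t)⟩
  | succ k ih =>
    intro i j h
    rw [pow_succ, Matrix.mul_apply] at h
    have hz : ∑ m : Fin n, (0 : ℝ) < ∑ m : Fin n, (A ^ k) i m * A m j := by simpa using h
    obtain ⟨m, -, hm⟩ := Finset.exists_lt_of_sum_lt hz
    have hpair : 0 < (A ^ k) i m ∧ 0 < A m j := by
      rcases mul_pos_iff.mp hm with hp | hp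
      · exact hp
      · exact absurd hp.1 (not_lt.mpr (pow_entry_nonneg hA k i m))
    obtain ⟨f, hf0, hfk, hfw⟩ := ih hpair.1
    refine ⟨fun t => if t ≤ k then f t else j, by simpa using hf0, by simp, ?_⟩
    intro t ht
    show 0 < A (if t ≤ k then f t else j) (if t + 1 ≤ k then f (t + 1) else j)
    by_cases htk : t < k
    · rw [if_pos (by omega : t ≤ k), if_pos (by omega : t + 1 ≤ k)]
      exact hfw t htk
    · have htk' : t = k := by omega
      subst htk'
      rw [if_pos (le_refl t), if_neg (by omega : ¬ t + 1 ≤ t), hfk]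
      exact hpair.2

lemma splice {A : Matrix (Fin n) (Fin n) ℝ} {f : ℕ → Fin n} {k a b : ℕ}
    (hw : IsWalk A f k) (hab : a < b) (hbk : b ≤ k) (hfab : f a = f b) :
    ∃ g : ℕ → Fin n, g 0 = f 0 ∧ g (k - (b - a)) = f k ∧ IsWalk A g (k - (b - a)) := by
  refine ⟨fun t => if t ≤ a then f t else f (t + (b - a)), by simp, ?_, ?_⟩
  · show (if k - (b - a) ≤ a then f (k - (b - a)) else f (k - (b - a) + (b - a))) = f k
    by_cases hc : k - (b - a) ≤ a
    · have hk : k = b := by omega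
      have ha : k - (b - a) = a := by omega
      rw [if_pos hc, ha, hfab, hk]
    · rw [if_neg hc]
      congr 1
      omega
  · intro t ht
    show 0 < A (if t ≤ a then f t else f (t + (b - a)))
        (if t + 1 ≤ a then f (t + 1) else f (t + 1 + (b - a)))
    by_cases h1 : t + 1 ≤ a
    · rw [if_pos (by omega : t ≤ a), if_pos h1]
      exact hw t (by omega)
    · by_cases h2 : t ≤ a
      · -- t = a
        have hta : t = a := by omega
        rw [if_pos h2, if_neg h1, hta, hfab,
          show a + 1 + (b - a) = b + 1 by omega]
        exact hw b (by omega)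
      · rw [if_neg h2, if_neg h1, show t + 1 + (b - a) = t + (b - a) + 1 by omega]
        exact hw (t + (b - a)) (by omega)

lemma shorten {A : Matrix (Fin n) (Fin n) ℝ} :
    ∀ (k : ℕ) (f : ℕ → Fin n), IsWalk A f k →
      ∃ (m : ℕ) (g : ℕ → Fin n), m ≤ n - 1 ∧ g 0 = f 0 ∧ g m = f k ∧ IsWalk A g m := by
  intro k
  induction k using Nat.strong_induction_on with
  | _ k ih =>
    intro f hw
    by_cases hk : k ≤ n - 1
    · exact ⟨k, f, hk, rfl, rfl, hw⟩
    · have hn0 : 0 < n := (f 0).pos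
      have hcard : Fintype.card (Fin n) < Fintype.card (Fin (k + 1)) := by
        simp only [Fintype.card_fin]
        omega
      obtain ⟨x, y, hxy, hfxy⟩ :=
        Fintype.exists_ne_map_eq_of_card_lt (fun t : Fin (k + 1) => f t.val) hcard
      rcases lt_or_gt_of_ne hxy with hlt | hlt
      · obtain ⟨g, hg0, hgk, hgw⟩ := splice hw (show x.val < y.val from hlt)
          (Nat.lt_succ_iff.mp y.isLt) hfxy
        obtain ⟨m, g', hm, hg'0, hg'm, hg'w⟩ := ih (k - (y.val - x.val)) (by omega) g hgw
        exact ⟨m, g', hm, by rw [hg'0, hg0], by rw [hg'm, hgk], hg'w⟩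
      · obtain ⟨g, hg0, hgk, hgw⟩ := splice hw (show y.val < x.val from hlt)
          (Nat.lt_succ_iff.mp x.isLt) hfxy.symm
        obtain ⟨m, g', hm, hg'0, hg'm, hg'w⟩ := ih (k - (x.val - y.val)) (by omega) g hgw
        exact ⟨m, g', hm, by rw [hg'0, hg0], by rw [hg'm, hgk], hg'w⟩

lemma dist_to_set {A : Matrix (Fin n) (Fin n) ℝ} (hA : ∀ i j, 0 ≤ A i j)
    {u v : Fin n} (huv : u ≠ v) (i : Fin n)
    (hreach : ∃ k : ℕ, 0 < (A ^ k) i u) :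
    ∃ (k : ℕ) (w : Fin n), k ≤ n - 2 ∧ (w = u ∨ w = v) ∧ 0 < (A ^ k) i w := by
  classical
  set P : ℕ → Prop := fun k => ∃ w : Fin n, (w = u ∨ w = v) ∧ 0 < (A ^ k) i w with hP
  have hex : ∃ k, P k := by
    obtain ⟨k, hk⟩ := hreach
    exact ⟨k, u, Or.inl rfl, hk⟩
  set k0 := Nat.find hex with hk0
  obtain ⟨w, hwuv, hpow⟩ := Nat.find_spec hex
  refine ⟨k0, w, ?_, hwuv, hpow⟩
  by_contra hbig
  push_neg at hbig
  obtain ⟨f, hf0, hfk, hfw⟩ := pow_to_walk hA hpow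
  by_cases hmid : ∃ t < k0, f t = u ∨ f t = v
  · obtain ⟨t, ht, hft⟩ := hmid
    have hwalk : IsWalk A f t := fun s hs => hfw s (by omega)
    have hpt : 0 < (A ^ t) i (f t) := by
      have := walk_to_pow hA hwalk
      rwa [hf0] at this
    exact Nat.find_min hex ht ⟨f t, hft, hpt⟩
  · push_neg at hmid
    have hcard2 : ({u, v} : Finset (Fin n)).card = 2 := by
      rw [Finset.card_insert_of_notMem (by simp [huv]), Finset.card_singleton]
    have hcardc : (Finset.univ \ ({u, v} : Finset (Fin n))).card = n - 2 := by
      rw [Finset.card_sdiff_of_subset (Finset.subset_univ _), hcard2, Finset.card_univ,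
        Fintype.card_fin]
    have hmaps : ∀ t ∈ Finset.range k0, f t ∈ Finset.univ \ ({u, v} : Finset (Fin n)) := by
      intro t ht
      rw [Finset.mem_range] at ht
      obtain ⟨h1, h2⟩ := hmid t ht
      simp [h1, h2]
    have huv2 : u ≠ v := huv
    have hn2 : 2 ≤ n := by
      have h1 : 1 < Fintype.card (Fin n) := Fintype.one_lt_card_iff_nontrivial.mpr ⟨⟨u, v, huv⟩⟩
      simp at h1; omega
    have hcards : (Finset.univ \ ({u, v} : Finset (Fin n))).card < (Finset.range k0).card := by
      rw [hcardc, Finset.card_range]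
      omega
    obtain ⟨a, ha, b, hb, hab, hfab⟩ :=
      Finset.exists_ne_map_eq_of_card_lt_of_maps_to hcards hmaps
    rw [Finset.mem_range] at ha hb
    rcases lt_or_gt_of_ne hab with hlt | hlt
    · obtain ⟨g, hg0, hgk, hgw⟩ := splice hfw hlt (Nat.le_of_lt hb) hfab
      have hps : 0 < (A ^ (k0 - (b - a))) i w := by
        have := walk_to_pow hA hgw
        rwa [hg0, hgk, hf0, hfk] at this
      exact Nat.find_min hex (show k0 - (b - a) < k0 by omega) ⟨w, hwuv, hps⟩
    · obtain ⟨g, hg0, hgk, hgw⟩ := splice hfw hlt (Nat.le_of_lt ha) hfab.symm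
      have hps : 0 < (A ^ (k0 - (a - b))) i w := by
        have := walk_to_pow hA hgw
        rwa [hg0, hgk, hf0, hfk] at this
      exact Nat.find_min hex (show k0 - (a - b) < k0 by omega) ⟨w, hwuv, hps⟩

lemma two_diag_pos {A S : Matrix (Fin n) (Fin n) ℝ} {e : Fin n → ℝ} (hn : 2 ≤ n)
    (hA : ∀ i j, 0 ≤ A i j) (he : ∀ i, 0 < e i) (hS : IsUnit S.det)
    (hdiag : A = S * Matrix.diagonal e * S⁻¹) :
    ∃ u v : Fin n, u ≠ v ∧ 0 < A u u ∧ 0 < A v v := by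
  classical
  have htr : ∑ i, A i i = ∑ i, e i := by
    have : Matrix.trace A = ∑ i, e i := by
      rw [hdiag, Matrix.trace_mul_cycle, Matrix.nonsing_inv_mul _ hS, one_mul,
        Matrix.trace_diagonal]
    simpa [Matrix.trace, Matrix.diag] using this
  have hA2 : A ^ 2 = S * Matrix.diagonal (fun i => e i * e i) * S⁻¹ := by
    rw [pow_two, hdiag]
    rw [show S * Matrix.diagonal e * S⁻¹ * (S * Matrix.diagonal e * S⁻¹)
        = S * Matrix.diagonal e * (S⁻¹ * (S * (Matrix.diagonal e * S⁻¹))) by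
      simp only [Matrix.mul_assoc]]
    rw [Matrix.nonsing_inv_mul_cancel_left _ _ hS]
    rw [show S * Matrix.diagonal e * (Matrix.diagonal e * S⁻¹)
        = S * (Matrix.diagonal e * Matrix.diagonal e) * S⁻¹ by
      simp only [Matrix.mul_assoc]]
    rw [Matrix.diagonal_mul_diagonal]
  have htr2 : ∑ i, ∑ j, A i j * A j i = ∑ i, e i * e i := by
    have h1 : Matrix.trace (A ^ 2) = ∑ i, e i * e i := by
      rw [hA2, Matrix.trace_mul_cycle, Matrix.nonsing_inv_mul _ hS, one_mul,
        Matrix.trace_diagonal]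
    have h2 : Matrix.trace (A ^ 2) = ∑ i, ∑ j, A i j * A j i := by
      rw [pow_two]
      simp [Matrix.trace, Matrix.diag, Matrix.mul_apply]
    rw [← h1, h2]
  by_contra hcon
  push_neg at hcon
  -- For i ≠ j, A i i * A j j = 0
  have hzero : ∀ i j : Fin n, i ≠ j → A i i * A j j = 0 := by
    intro i j hij
    have := hcon i j hij
    rcases lt_or_eq_of_le (hA i i) with h1 | h1
    · have h2 : A j j = 0 := le_antisymm (this h1) (hA j j)
      rw [h2, mul_zero]
    · rw [← h1, zero_mul]
  -- (∑ A i i)^2 = ∑ (A i i)^2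
  have key1 : (∑ i, A i i) * (∑ j, A j j) = ∑ i, A i i * A i i := by
    rw [Finset.sum_mul_sum]
    refine Finset.sum_congr rfl fun i _ => ?_
    exact Finset.sum_eq_single_of_mem i (Finset.mem_univ i)
      (fun j _ hj => hzero i j (Ne.symm hj))
  -- ∑ (A i i)^2 ≤ ∑_{i,j} A i j * A j i
  have key2 : ∑ i, A i i * A i i ≤ ∑ i, ∑ j, A i j * A j i := by
    refine Finset.sum_le_sum fun i _ => ?_
    exact Finset.single_le_sum (f := fun j => A i j * A j i)
      (fun j _ => mul_nonneg (hA i j) (hA j i)) (Finset.mem_univ i)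
  -- but (∑ e)^2 > ∑ e^2
  set i0 : Fin n := ⟨0, by omega⟩ with hi0
  set j0 : Fin n := ⟨1, by omega⟩ with hj0
  have hi0j0 : i0 ≠ j0 := Fin.ne_of_val_ne (by simp [hi0, hj0])
  have key3 : ∑ i, e i * e i < (∑ i, e i) * (∑ j, e j) := by
    rw [Finset.sum_mul_sum]
    refine Finset.sum_lt_sum (fun i _ => Finset.single_le_sum
      (f := fun j => e i * e j)
      (fun j _ => le_of_lt (mul_pos (he i) (he j))) (Finset.mem_univ i)) ⟨i0, Finset.mem_univ i0, ?_⟩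
    have hsplit : ∑ j, e i0 * e j
        = e i0 * e i0 + ∑ j ∈ Finset.univ.erase i0, e i0 * e j :=
      (Finset.add_sum_erase _ (fun j => e i0 * e j) (Finset.mem_univ i0)).symm
    rw [hsplit]
    have hpos : 0 < ∑ j ∈ Finset.univ.erase i0, e i0 * e j := by
      refine Finset.sum_pos' (fun j _ => le_of_lt (mul_pos (he i0) (he j))) ?_
      exact ⟨j0, Finset.mem_erase.mpr ⟨Ne.symm hi0j0, Finset.mem_univ j0⟩,
        mul_pos (he i0) (he j0)⟩
    linarith
  rw [htr] at key1
  rw [htr2] at key2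
  rw [key1] at key3
  linarith

end GDNaux

/-- Every irreducible `n × n` GDN matrix (`n ≥ 2`, diagonalizable with all eigenvalues
positive, entrywise nonnegative) has index of primitivity at most `2n - 3`:
`A^{2n-3}` is entrywise positive. -/
theorem GDN_index_of_primitivity_le {n : ℕ} (hn : 2 ≤ n)
    (A S : Matrix (Fin n) (Fin n) ℝ) (e : Fin n → ℝ)
    (hA : ∀ i j, 0 ≤ A i j)
    (he : ∀ i, 0 < e i)
    (hS : IsUnit S.det)
    (hdiag : A = S * Matrix.diagonal e * S⁻¹)
    (hirr : MatIrreducible A) :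
    ∀ i j, 0 < (A ^ (2 * n - 3)) i j := by
  obtain ⟨u, v, huv, hu, hv⟩ := GDNaux.two_diag_pos hn hA he hS hdiag
  intro i j
  have hreach_u : ∃ k : ℕ, 0 < (A ^ k) i u := (hirr i u).imp fun k hk => hk.2
  obtain ⟨k, w, hk, hw, hpk⟩ := GDNaux.dist_to_set hA huv i hreach_u
  have hww : 0 < A w w := by rcases hw with rfl | rfl
                             · exact hu
                             · exact hv
  obtain ⟨m0, hm0pos, hm0⟩ := hirr w j
  obtain ⟨f, hf0, hfm, hfw⟩ := GDNaux.pow_to_walk hA hm0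
  obtain ⟨l, g, hl, hg0, hgl, hgw⟩ := GDNaux.shorten m0 f hfw
  have hpl : 0 < (A ^ l) w j := by
    have := GDNaux.walk_to_pow hA hgw
    rwa [hg0, hgl, hf0, hfm] at this
  have hloop : 0 < (A ^ (2 * n - 3 - k - l)) w w := GDNaux.loop_pow hA hww _
  have hsum : k + (2 * n - 3 - k - l) + l = 2 * n - 3 := by omega
  rw [← hsum]
  exact GDNaux.compose hA (GDNaux.compose hA hpk hloop) hpl
end

section
/- Let n ≥ 3 be odd, let d_1 > d_2 > ... > d_{n−1} > d_n = 0, and let 0 < ε < min_i (d_i − d_{i+1})/2. Let A be the n×n matrix with A_{ii} = d_i, A_{i,i+1} = ε for 1 ≤ i ≤ n−1, A_{n,1} = ε, and all other entries zero. Then all eigenvalues of A are real and positive, so A is GDN. -/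
open Matrix

open Fin.NatCast Fin.CommRing in
/-- Determinant of a bidiagonal-plus-corner matrix: only the identity and the
full cycle contribute. -/
lemma det_bidiag_corner {m : ℕ} (hm : 1 ≤ m) (hodd : Odd (m + 1))
    (g : Fin (m+1) → ℝ) (ε : ℝ) (M : Matrix (Fin (m+1)) (Fin (m+1)) ℝ)
    (hM : ∀ i j : Fin (m+1), M i j =
      if (i : ℕ) = (j : ℕ) then g i
      else if (j : ℕ) = (i : ℕ) + 1 then ε
      else if (i : ℕ) = (m + 1) - 1 ∧ (j : ℕ) = 0 then ε
      else 0) :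
    M.det = (∏ i, g i) + ε ^ (m + 1) := by
  have h10 : (1 : Fin (m+1)) ≠ 0 := by
    intro h
    have := congrArg Fin.val h
    simp [Fin.val_one', Nat.mod_eq_of_lt (by omega : 1 < m + 1)] at this
  set σc : Equiv.Perm (Fin (m+1)) := Equiv.subRight (1 : Fin (m+1)) with hσc
  have hσc_apply : ∀ i, σc i = i - 1 := fun i => rfl
  have hzero : ∀ σ : Equiv.Perm (Fin (m+1)), σ ≠ 1 → σ ≠ σc → ∏ i, M (σ i) i = 0 := by
    intro σ hσ1 hσ2
    by_contra hprod
    have hne : ∀ i, M (σ i) i ≠ 0 := by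
      intro i hi
      exact hprod (Finset.prod_eq_zero (Finset.mem_univ i) hi)
    have halt : ∀ i : Fin (m+1), σ i = i ∨ σ i = i - 1 := by
      intro i
      have h := hne i
      rw [hM] at h
      by_cases h1 : ((σ i : ℕ) = (i : ℕ))
      · exact Or.inl (Fin.ext h1)
      · rw [if_neg h1] at h
        by_cases h2 : ((i : ℕ) = (σ i : ℕ) + 1)
        · right
          apply Fin.ext
          rw [Fin.coe_sub_one, if_neg]
          · omega
          · intro h0
            rw [h0] at h2
            simp at h2
        · rw [if_neg h2] at h
          by_cases h3 : ((σ i : ℕ) = m + 1 - 1 ∧ (i : ℕ) = 0)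
          · right
            apply Fin.ext
            have hi0 : i = 0 := Fin.ext h3.2
            rw [Fin.coe_sub_one, if_pos hi0]
            have h3a := h3.1
            omega
          · rw [if_neg h3] at h; exact (h rfl).elim
    have hmove : ∃ i₀, σ i₀ ≠ i₀ := by
      by_contra hc
      push_neg at hc
      exact hσ1 (Equiv.ext hc)
    obtain ⟨i₀, hi₀⟩ := hmove
    have hstep : ∀ i : Fin (m+1), σ i = i - 1 → σ (i - 1) = i - 1 - 1 := by
      intro i hi
      rcases halt (i - 1) with h | h
      · exfalso
        have h' : σ (i - 1) = σ i := by rw [h, hi]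
        have h'' : i - 1 = i := σ.injective h'
        exact h10 (sub_eq_self.mp h'')
      · exact h
    have hi₀' : σ i₀ = i₀ - 1 := (halt i₀).resolve_left hi₀
    have hall : ∀ k : ℕ, σ (i₀ - (k : Fin (m+1))) = i₀ - (k : Fin (m+1)) - 1 := by
      intro k
      induction k with
      | zero => simpa using hi₀'
      | succ k ih =>
        have he : i₀ - ((k+1 : ℕ) : Fin (m+1)) = i₀ - (k : Fin (m+1)) - 1 := by
          push_cast
          ring
        rw [he]
        exact hstep _ ih
    apply hσ2
    apply Equiv.ext
    intro i
    have he : i₀ - ((((i₀ - i : Fin (m+1))).val : ℕ) : Fin (m+1)) = i := by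
      rw [Fin.cast_val_eq_self]; ring
    rw [hσc_apply, ← he]
    exact hall _
  rw [Matrix.det_apply]
  have h1c : (1 : Equiv.Perm (Fin (m+1))) ≠ σc := by
    intro h
    have h0 := Equiv.ext_iff.mp h 0
    simp only [Equiv.Perm.coe_one, id_eq, hσc_apply] at h0
    exact h10 (sub_eq_self.mp h0.symm)
  rw [← Finset.sum_subset (Finset.subset_univ {1, σc})]
  · rw [Finset.sum_pair h1c]
    have hterm1 : ∏ i, M ((1 : Equiv.Perm (Fin (m+1))) i) i = ∏ i, g i := by
      apply Finset.prod_congr rfl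
      intro i _
      rw [Equiv.Perm.coe_one, id_eq, hM, if_pos rfl]
    have htermc : ∏ i, M (σc i) i = ε ^ (m+1) := by
      have hfac : ∀ i : Fin (m+1), M (σc i) i = ε := by
        intro i
        rw [hσc_apply, hM]
        by_cases hi : i = 0
        · subst hi
          rw [Fin.coe_sub_one, if_pos rfl]
          simp only [Fin.val_zero]
          rw [if_neg (by omega), if_neg (by omega), if_pos ⟨by omega, trivial⟩]
        · have hiv : 1 ≤ (i : ℕ) := by
            have := Fin.pos_iff_ne_zero.mpr hi
            omega
          rw [Fin.coe_sub_one, if_neg hi]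
          rw [if_neg (by omega), if_pos (by omega)]
      rw [Finset.prod_congr rfl (fun i _ => hfac i), Finset.prod_const]
      simp
    have hsignc : Equiv.Perm.sign σc = 1 := by
      have hrot : σc = (finRotate (m+1))⁻¹ := by
        apply Equiv.ext
        intro i
        rw [hσc_apply]
        symm
        rw [Equiv.Perm.inv_def, Equiv.symm_apply_eq, finRotate_succ_apply, sub_add_cancel]
      rw [hrot, Equiv.Perm.sign_inv, sign_finRotate]
      have hev : Even m := by
        rcases hodd with ⟨k, hk⟩; exact ⟨k, by omega⟩
      exact hev.neg_one_pow
    rw [hterm1, htermc, Equiv.Perm.sign_one, hsignc, one_smul, one_smul]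
  · intro σ _ hσ
    simp only [Finset.mem_insert, Finset.mem_singleton] at hσ
    push_neg at hσ
    rw [hzero σ hσ.1 hσ.2, smul_zero]

/-- If a continuous function takes values of opposite signs at the endpoints of an
interval, it has a root strictly inside. -/
lemma exists_root_of_mul_neg {f : ℝ → ℝ} (hf : Continuous f) {a b : ℝ} (hab : a < b)
    (hsign : f a * f b < 0) : ∃ x, x ∈ Set.Ioo a b ∧ f x = 0 := by
  rcases mul_neg_iff.mp hsign with ⟨ha, hb⟩ | ⟨ha, hb⟩
  · have h := intermediate_value_Ioo' (le_of_lt hab) hf.continuousOn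
    obtain ⟨x, hx, hfx⟩ := h ⟨hb, ha⟩
    exact ⟨x, hx, hfx⟩
  · have h := intermediate_value_Ioo (le_of_lt hab) hf.continuousOn
    obtain ⟨x, hx, hfx⟩ := h ⟨ha, hb⟩
    exact ⟨x, hx, hfx⟩

/-- If one factor has absolute value `ε` and all others have absolute value
strictly greater than `ε`, the absolute value of the product exceeds `ε ^ n`. -/
lemma eps_pow_lt_abs_prod {n : ℕ} (hn : 2 ≤ n) {ε : ℝ} (hε : 0 < ε) (h : Fin n → ℝ)
    (i : Fin n) (hi : |h i| = ε) (hj : ∀ j, j ≠ i → ε < |h j|) :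
    ε ^ n < |∏ j, h j| := by
  rw [Finset.abs_prod]
  have he : ε ^ n = ∏ _j : Fin n, ε := by
    rw [Finset.prod_const, Finset.card_univ, Fintype.card_fin]
  rw [he]
  apply Finset.prod_lt_prod
  · intro j _; exact hε
  · intro j _
    rcases eq_or_ne j i with rfl | hne
    · exact le_of_eq hi.symm
    · exact le_of_lt (hj j hne)
  · haveI : Nontrivial (Fin n) := Fin.nontrivial_iff_two_le.mpr hn
    obtain ⟨j, hne⟩ := exists_ne i
    exact ⟨j, Finset.mem_univ j, hj j hne⟩

/-- The bidiagonal-plus-corner construction: for odd `n ≥ 3`, diagonal entries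
`d 0 > d 1 > ⋯ > d (n-2) > d (n-1) = 0`, superdiagonal entries `ε` with
`0 < ε < (d i - d (i+1))/2`, and corner entry `A (n-1) 0 = ε`, the matrix `A` has all
eigenvalues real and positive; in particular it is diagonalizable with positive
eigenvalues, hence GDN. -/
theorem bidiagonal_corner_GDN {n : ℕ} (hn : 3 ≤ n) (hodd : Odd n)
    (d : ℕ → ℝ) (ε : ℝ)
    (hdec : ∀ i, i + 1 < n → d (i + 1) < d i)
    (hlast : d (n - 1) = 0)
    (hε : 0 < ε)
    (hεlt : ∀ i, i + 1 < n → ε < (d i - d (i + 1)) / 2)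
    (A : Matrix (Fin n) (Fin n) ℝ)
    (hAdef : ∀ i j : Fin n, A i j =
      if (i : ℕ) = (j : ℕ) then d i
      else if (j : ℕ) = (i : ℕ) + 1 then ε
      else if (i : ℕ) = n - 1 ∧ (j : ℕ) = 0 then ε
      else 0) :
    ∃ (S : Matrix (Fin n) (Fin n) ℝ) (e : Fin n → ℝ),
      (∀ i, 0 < e i) ∧ IsUnit S.det ∧ A = S * Matrix.diagonal e * S⁻¹ := by
  obtain ⟨m, rfl⟩ : ∃ m, n = m + 1 := ⟨n - 1, by omega⟩
  have hm : 1 ≤ m := by omega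
  have hlast' : d m = 0 := by simpa using hlast
  have hgap2 : ∀ a : ℕ, a + 1 < m + 1 → 2 * ε < d a - d (a + 1) := by
    intro a ha
    have := hεlt a ha
    linarith
  have hmono : ∀ a b : ℕ, a < b → b < m + 1 → d b < d a := by
    intro a b hab hbn
    induction b with
    | zero => omega
    | succ b ih =>
      rcases Nat.lt_or_ge a b with h | h
      · exact lt_trans (hdec b (by omega)) (ih h (by omega))
      · have hab' : a = b := by omega
        subst hab'
        exact hdec a (by omega)
  have hgap : ∀ a b : ℕ, a < b → b < m + 1 → 2 * ε < d a - d b := by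
    intro a b hab hbn
    have h1 := hgap2 a (by omega)
    rcases Nat.lt_or_ge (a+1) b with h | h
    · have := hmono (a+1) b h hbn
      linarith
    · have hb : a + 1 = b := by omega
      subst hb; linarith
  have hdpos : ∀ a : ℕ, a < m → 2 * ε < d a := by
    intro a ha
    have := hgap a m ha (by omega)
    linarith [hlast']
  set f : ℝ → ℝ := fun x => (∏ j : Fin (m+1), (d (j:ℕ) - x)) + ε ^ (m+1) with hfdef
  have hfeq : ∀ x, f x = (∏ j : Fin (m+1), (d (j:ℕ) - x)) + ε ^ (m+1) := fun x => rfl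
  have hfc : Continuous f := by
    apply Continuous.add _ continuous_const
    exact continuous_finset_prod _ fun j _ => continuous_const.sub continuous_id
  -- roots of f in small intervals around each d i
  have key : ∀ i : Fin (m+1), ∃ x,
      (d (i:ℕ) - ε < x ∧ x < d (i:ℕ) + ε) ∧ 0 < x ∧ f x = 0 := by
    intro i
    by_cases hilast : (i : ℕ) = m
    · have hdi : d (i:ℕ) = 0 := by rw [hilast]; exact hlast'
      have hf0 : f 0 = ε ^ (m+1) := by
        rw [hfeq]
        have hz : (∏ j : Fin (m+1), (d (j:ℕ) - 0)) = 0 := by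
          apply Finset.prod_eq_zero (Finset.mem_univ i)
          rw [sub_zero, hdi]
        rw [hz, zero_add]
      have hjlt : ∀ j : Fin (m+1), j ≠ i → (j:ℕ) < m := by
        intro j hne
        have h1 := j.isLt
        have h2 : (j:ℕ) ≠ m := fun h => hne (Fin.ext (h.trans hilast.symm))
        omega
      have hfb : f ε < 0 := by
        have habs : ε ^ (m+1) < |∏ j : Fin (m+1), (d (j:ℕ) - ε)| := by
          apply eps_pow_lt_abs_prod (by omega) hε _ i
          · rw [hdi, zero_sub, abs_neg, abs_of_pos hε]
          · intro j hne
            have := hdpos (j:ℕ) (hjlt j hne)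
            rw [abs_of_pos (by linarith)]
            linarith
        have hneg : (∏ j : Fin (m+1), (d (j:ℕ) - ε)) < 0 := by
          rw [← Finset.mul_prod_erase Finset.univ _ (Finset.mem_univ i)]
          apply mul_neg_of_neg_of_pos
          · rw [hdi]; linarith
          · apply Finset.prod_pos
            intro j hj
            have := hdpos (j:ℕ) (hjlt j (Finset.ne_of_mem_erase hj))
            linarith
        have hlt : (∏ j : Fin (m+1), (d (j:ℕ) - ε)) < -ε^(m+1) := by
          rw [abs_of_neg hneg] at habs; linarith
        rw [hfeq]
        linarith
      have hsign : f 0 * f ε < 0 := by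
        rw [hf0]
        exact mul_neg_of_pos_of_neg (pow_pos hε _) hfb
      obtain ⟨x, hx, hfx⟩ := exists_root_of_mul_neg hfc hε hsign
      exact ⟨x, ⟨by rw [hdi]; linarith [hx.1], by rw [hdi]; linarith [hx.2]⟩, hx.1, hfx⟩
    · have hiv : (i:ℕ) < m := by have := i.isLt; omega
      have hfar : ∀ j : Fin (m+1), j ≠ i → 2 * ε < |d (j:ℕ) - d (i:ℕ)| := by
        intro j hne
        have hnv : (j:ℕ) ≠ (i:ℕ) := fun h => hne (Fin.ext h)
        rcases Nat.lt_or_ge (j:ℕ) (i:ℕ) with h | h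
        · have := hgap (j:ℕ) (i:ℕ) h i.isLt
          rw [abs_of_pos (by linarith)]; linarith
        · have h' : (i:ℕ) < (j:ℕ) := by omega
          have := hgap (i:ℕ) (j:ℕ) h' j.isLt
          rw [abs_of_neg (by linarith)]; linarith
      have habs : ∀ x : ℝ, |d (i:ℕ) - x| = ε →
          ε^(m+1) < |∏ j : Fin (m+1), (d (j:ℕ) - x)| := by
        intro x hx
        apply eps_pow_lt_abs_prod (by omega) hε _ i hx
        intro j hne
        have h1 := hfar j hne
        have h2 : |d (j:ℕ) - d (i:ℕ)| ≤ |d (j:ℕ) - x| + |d (i:ℕ) - x| := by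
          have he : d (j:ℕ) - d (i:ℕ) = (d (j:ℕ) - x) - (d (i:ℕ) - x) := by ring
          rw [he]
          exact abs_sub _ _
        rw [hx] at h2
        linarith
      have hPa : |d (i:ℕ) - (d (i:ℕ) - ε)| = ε := by
        rw [sub_sub_cancel, abs_of_pos hε]
      have hPb : |d (i:ℕ) - (d (i:ℕ) + ε)| = ε := by
        have he : d (i:ℕ) - (d (i:ℕ) + ε) = -ε := by ring
        rw [he, abs_neg, abs_of_pos hε]
      have hPP : (∏ j : Fin (m+1), (d (j:ℕ) - (d (i:ℕ) - ε))) *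
          (∏ j : Fin (m+1), (d (j:ℕ) - (d (i:ℕ) + ε))) < 0 := by
        rw [← Finset.prod_mul_distrib]
        have heq : ∀ j : Fin (m+1), (d (j:ℕ) - (d (i:ℕ) - ε)) * (d (j:ℕ) - (d (i:ℕ) + ε)) =
            (d (j:ℕ) - d (i:ℕ))^2 - ε^2 := by
          intro j; ring
        rw [Finset.prod_congr rfl (fun j _ => heq j)]
        rw [← Finset.mul_prod_erase Finset.univ _ (Finset.mem_univ i)]
        apply mul_neg_of_neg_of_pos
        · have he : d (i:ℕ) - d (i:ℕ) = 0 := sub_self _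
          rw [he]
          nlinarith [hε]
        · apply Finset.prod_pos
          intro j hj
          have h1 := hfar j (Finset.ne_of_mem_erase hj)
          have h2 : ε < |d (j:ℕ) - d (i:ℕ)| := by linarith
          nlinarith [sq_abs (d (j:ℕ) - d (i:ℕ)), abs_nonneg (d (j:ℕ) - d (i:ℕ))]
      have hab : d (i:ℕ) - ε < d (i:ℕ) + ε := by linarith
      have hsign : f (d (i:ℕ) - ε) * f (d (i:ℕ) + ε) < 0 := by
        rcases mul_neg_iff.mp hPP with ⟨h1, h2⟩ | ⟨h1, h2⟩
        · have hb' := habs (d (i:ℕ) + ε) hPb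
          have hlt : (∏ j : Fin (m+1), (d (j:ℕ) - (d (i:ℕ) + ε))) < -ε^(m+1) := by
            rw [abs_of_neg h2] at hb'; linarith
          have hfa : 0 < f (d (i:ℕ) - ε) := by
            rw [hfeq]; have := pow_pos hε (m+1); linarith
          have hfb : f (d (i:ℕ) + ε) < 0 := by rw [hfeq]; linarith
          exact mul_neg_of_pos_of_neg hfa hfb
        · have ha' := habs (d (i:ℕ) - ε) hPa
          have hlt : (∏ j : Fin (m+1), (d (j:ℕ) - (d (i:ℕ) - ε))) < -ε^(m+1) := by
            rw [abs_of_neg h1] at ha'; linarith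
          have hfa : f (d (i:ℕ) - ε) < 0 := by rw [hfeq]; linarith
          have hfb : 0 < f (d (i:ℕ) + ε) := by
            rw [hfeq]; have := pow_pos hε (m+1); linarith
          exact mul_neg_of_neg_of_pos hfa hfb
      obtain ⟨x, hx, hfx⟩ := exists_root_of_mul_neg hfc hab hsign
      have hxpos : 0 < x := by
        have h1 := hdpos (i:ℕ) hiv
        have h2 := hx.1
        linarith
      exact ⟨x, ⟨hx.1, hx.2⟩, hxpos, hfx⟩
  choose lam hlam using key
  have hstrict : ∀ i j : Fin (m+1), (i:ℕ) < (j:ℕ) → lam j < lam i := by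
    intro i j hij
    have h1 : lam j < d (j:ℕ) + ε := (hlam j).1.2
    have h2 : d (i:ℕ) - ε < lam i := (hlam i).1.1
    have h3 : d (j:ℕ) ≤ d ((i:ℕ)+1) := by
      rcases Nat.lt_or_ge ((i:ℕ)+1) (j:ℕ) with h | h
      · exact le_of_lt (hmono _ _ h j.isLt)
      · have he : (i:ℕ) + 1 = (j:ℕ) := by omega
        rw [he]
    have h4 := hgap2 (i:ℕ) (by have := j.isLt; omega)
    linarith
  have hinj : Function.Injective lam := by
    intro i j hij
    by_contra hne
    have hnv : (i:ℕ) ≠ (j:ℕ) := fun h => hne (Fin.ext h)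
    rcases Nat.lt_or_ge (i:ℕ) (j:ℕ) with h | h
    · have := hstrict i j h; linarith
    · have h' : (j:ℕ) < (i:ℕ) := by omega
      have := hstrict j i h'; linarith
  have hdet : ∀ i : Fin (m+1),
      (A - lam i • (1 : Matrix (Fin (m+1)) (Fin (m+1)) ℝ)).det = 0 := by
    intro i
    have hM : ∀ p q : Fin (m+1), (A - lam i • 1) p q =
        if (p:ℕ) = (q:ℕ) then (fun r : Fin (m+1) => d (r:ℕ) - lam i) p
        else if (q:ℕ) = (p:ℕ)+1 then ε
        else if (p:ℕ) = (m+1)-1 ∧ (q:ℕ) = 0 then ε else 0 := by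
      intro p q
      rw [Matrix.sub_apply, Matrix.smul_apply, Matrix.one_apply, hAdef]
      by_cases hpq : (p:ℕ) = (q:ℕ)
      · have hpq' : p = q := Fin.ext hpq
        rw [if_pos hpq, if_pos hpq, if_pos hpq', smul_eq_mul, mul_one]
      · have hpq' : p ≠ q := fun h => hpq (by rw [h])
        rw [if_neg hpq, if_neg hpq, if_neg hpq', smul_eq_mul, mul_zero, sub_zero]
    rw [det_bidiag_corner hm hodd _ ε _ hM]
    have h4 := (hlam i).2.2
    rw [hfeq] at h4
    exact h4
  have hvec : ∀ i : Fin (m+1), ∃ v : Fin (m+1) → ℝ, v ≠ 0 ∧ A.mulVec v = lam i • v := by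
    intro i
    obtain ⟨v, hv0, hv⟩ := Matrix.exists_mulVec_eq_zero_iff.mpr (hdet i)
    refine ⟨v, hv0, ?_⟩
    have he : (A - lam i • 1).mulVec v = A.mulVec v - lam i • v := by
      rw [Matrix.sub_mulVec, Matrix.smul_mulVec, Matrix.one_mulVec]
    rw [he] at hv
    exact sub_eq_zero.mp hv
  choose v hv0 hveq using hvec
  have hev : ∀ i, Module.End.HasEigenvector (Matrix.mulVecLin A) (lam i) (v i) := by
    intro i
    refine ⟨?_, hv0 i⟩
    rw [Module.End.mem_eigenspace_iff, Matrix.mulVecLin_apply]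
    exact hveq i
  have hli : LinearIndependent ℝ v :=
    Module.End.eigenvectors_linearIndependent' (Matrix.mulVecLin A) lam hinj v hev
  have hcard : Fintype.card (Fin (m+1)) = Module.finrank ℝ (Fin (m+1) → ℝ) := by
    simp [Module.finrank_fintype_fun_eq_card]
  let bb := basisOfLinearIndependentOfCardEqFinrank hli hcard
  have hbb : ⇑bb = v := coe_basisOfLinearIndependentOfCardEqFinrank hli hcard
  set S := (Pi.basisFun ℝ (Fin (m+1))).toMatrix ⇑bb with hS
  have hSu : IsUnit S.det := by
    apply Matrix.isUnit_det_of_right_inverse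
      (B := bb.toMatrix ⇑(Pi.basisFun ℝ (Fin (m+1))))
    rw [hS]
    exact Module.Basis.toMatrix_mul_toMatrix_flip _ _
  have hSentry : ∀ p q, S p q = v q p := by
    intro p q
    rw [hS, Module.Basis.toMatrix_apply, Pi.basisFun_repr, hbb]
  have hAS : A * S = S * Matrix.diagonal lam := by
    ext p q
    rw [Matrix.mul_apply, Matrix.mul_diagonal, hSentry]
    have he : ∑ k, A p k * S k q = A.mulVec (v q) p := by
      simp only [Matrix.mulVec, dotProduct]
      exact Finset.sum_congr rfl fun k _ => by rw [hSentry]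
    rw [he, hveq q]
    simp [mul_comm]
  refine ⟨S, lam, fun i => (hlam i).2.1, hSu, ?_⟩
  have h1 : S * S⁻¹ = 1 := Matrix.mul_nonsing_inv S hSu
  calc A = A * (S * S⁻¹) := by rw [h1, Matrix.mul_one]
    _ = (A * S) * S⁻¹ := by rw [Matrix.mul_assoc]
    _ = S * Matrix.diagonal lam * S⁻¹ := by rw [hAS]
end

section
/- Let A be an n×n GDN matrix in block upper triangular form A = [[B, C], [0, D]] with B of size k×k (1 ≤ k < n). Then for every real α > 0, the continuous power A^α is also block upper triangular with zero lower-left (n−k)×k block. -/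
open Matrix

open Finset in

lemma exp_vanish {ι : Type*} [Fintype ι] (c d : ι → ℝ) (hd : ∀ i, 0 ≤ d i)
    (h : ∀ m : ℕ, ∑ i, c i * d i ^ (m + 1) = 0) {α : ℝ} (hα : 0 < α) :
    ∑ i, c i * d i ^ α = 0 := by
  classical
  set s : Finset ℝ := Finset.univ.image d with hs
  set a : ℝ → ℝ := fun v => ∑ i ∈ Finset.univ.filter (fun i => d i = v), c i with ha
  have grp : ∀ (f : ℝ → ℝ), ∑ i, c i * f (d i) = ∑ v ∈ s, a v * f v := by
    intro f
    rw [← Finset.sum_fiberwise_of_maps_to (g := d) (fun i _ => Finset.mem_image_of_mem d (Finset.mem_univ i))]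
    refine Finset.sum_congr rfl fun v hv => ?_
    rw [ha, Finset.sum_mul]
    refine Finset.sum_congr rfl fun i hi => ?_
    rw [(Finset.mem_filter.mp hi).2]
  set t : Finset ℝ := s.filter (· ≠ 0) with ht
  have hsum_t : ∀ (f : ℝ → ℝ), (∀ m : ℕ, f 0 = 0) → ∑ v ∈ t, a v * f v = ∑ v ∈ s, a v * f v := by
    intro f hf
    rw [← Finset.sum_filter_add_sum_filter_not s (· ≠ 0)]
    have : ∑ v ∈ s.filter (fun v => ¬ v ≠ 0), a v * f v = 0 := by
      refine Finset.sum_eq_zero fun v hv => ?_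
      have : v = 0 := by simpa using (Finset.mem_filter.mp hv).2
      rw [this, hf 0, mul_zero]
    rw [this, add_zero]
  -- enumeration of t
  set r := t.card with hr
  have e : {x // x ∈ t} ≃ Fin r := t.equivFin
  set w : Fin r → ℝ := fun i => ((e.symm i : {x // x ∈ t}) : ℝ) with hw
  have hwinj : Function.Injective w := fun i j hij => by
    apply e.symm.injective; exact Subtype.ext hij
  have hwt : ∀ i, w i ∈ t := fun i => (e.symm i).2
  have hwne : ∀ i, w i ≠ 0 := fun i => (Finset.mem_filter.mp (hwt i)).2
  have hsumw : ∀ (f : ℝ → ℝ), ∑ i : Fin r, f (w i) = ∑ v ∈ t, f v := by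
    intro f
    rw [← Finset.sum_coe_sort t f]
    exact Equiv.sum_comp e.symm (fun (x : {x // x ∈ t}) => f (x : ℝ))
  -- the Vandermonde-type matrix
  set M : Matrix (Fin r) (Fin r) ℝ := fun i j => w j ^ ((i : ℕ) + 1) with hM
  have hMfac : M = (Matrix.vandermonde w)ᵀ * Matrix.diagonal w := by
    ext i j
    simp [hM, Matrix.mul_diagonal, Matrix.vandermonde, pow_succ]
  have hMdet : M.det ≠ 0 := by
    rw [hMfac, Matrix.det_mul, Matrix.det_transpose, Matrix.det_diagonal]
    exact mul_ne_zero (Matrix.det_vandermonde_ne_zero_iff.mpr hwinj)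
      (Finset.prod_ne_zero_iff.mpr fun i _ => hwne i)
  set b : Fin r → ℝ := fun j => a (w j) with hb
  have hMb : M.mulVec b = 0 := by
    funext m
    have h1 : ∀ (p : ℕ), (0:ℝ) ^ (p + 1) = 0 := fun p => zero_pow (Nat.succ_ne_zero p)
    have := h ((m : ℕ))
    calc M.mulVec b m = ∑ j, a (w j) * (w j) ^ ((m : ℕ) + 1) := by
          simp [Matrix.mulVec, dotProduct, hM, hb, mul_comm]
      _ = ∑ v ∈ t, a v * v ^ ((m : ℕ) + 1) := hsumw (fun v => a v * v ^ ((m : ℕ) + 1))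
      _ = ∑ v ∈ s, a v * v ^ ((m : ℕ) + 1) := by
          refine hsum_t (fun v => v ^ ((m : ℕ) + 1)) (fun _ => h1 _)
      _ = ∑ i, c i * d i ^ ((m : ℕ) + 1) := (grp (fun v => v ^ ((m : ℕ) + 1))).symm
      _ = 0 := h _
  have hb0 : b = 0 := by
    have hU : IsUnit M.det := isUnit_iff_ne_zero.mpr hMdet
    have := congrArg (fun v => M⁻¹.mulVec v) hMb
    simpa [Matrix.mulVec_mulVec, Matrix.nonsing_inv_mul M hU] using this
  have hat : ∀ v ∈ t, a v = 0 := by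
    intro v hv
    have : a (w (e ⟨v, hv⟩)) = 0 := congrFun hb0 (e ⟨v, hv⟩)
    simpa [hw] using this
  -- conclude
  have hrpow0 : (0:ℝ) ^ α = 0 := Real.zero_rpow hα.ne'
  calc ∑ i, c i * d i ^ α = ∑ v ∈ s, a v * v ^ α := grp (fun v => v ^ α)
    _ = ∑ v ∈ t, a v * v ^ α := (hsum_t (fun v => v ^ α) (fun _ => hrpow0)).symm
    _ = 0 := Finset.sum_eq_zero fun v hv => by rw [hat v hv, zero_mul]


/-- If a GDN matrix `A` is block upper triangular with a `k × k` leading block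
(`1 ≤ k < n`), i.e. `A i j = 0` whenever `k ≤ i` and `j < k`, then every continuous power
`A^α`, `α > 0`, is block upper triangular with the same zero lower-left block. -/
theorem contPow_block_upper_triangular {n : ℕ}
    (A S : Matrix (Fin n) (Fin n) ℝ) (d : Fin n → ℝ)
    (hA : ∀ i j, 0 ≤ A i j)
    (hd : ∀ i, 0 ≤ d i)
    (hS : IsUnit S.det)
    (hdiag : A = S * Matrix.diagonal d * S⁻¹)
    (k : ℕ) (hk1 : 1 ≤ k) (hkn : k < n)
    (hblock : ∀ i j : Fin n, k ≤ (i : ℕ) → (j : ℕ) < k → A i j = 0) :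
    ∀ α : ℝ, 0 < α →
      ∀ i j : Fin n, k ≤ (i : ℕ) → (j : ℕ) < k → contPow S d α i j = 0 := by
  intro α hα i j hi hj
  have hSS : S⁻¹ * S = 1 := Matrix.nonsing_inv_mul S hS
  -- A ^ (m+1) = S * diag d ^ (m+1) * S⁻¹
  have hpow : ∀ m : ℕ, A ^ (m + 1) = S * (Matrix.diagonal d) ^ (m + 1) * S⁻¹ := by
    intro m
    induction m with
    | zero => simpa using hdiag
    | succ m ih =>
      rw [pow_succ, ih, hdiag, pow_succ]
      simp only [Matrix.mul_assoc]
      rw [← Matrix.mul_assoc S⁻¹ S, hSS, Matrix.one_mul]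
      simp only [pow_succ, Matrix.mul_assoc]
  -- block vanishing of powers
  have hblockpow : ∀ m : ℕ, ∀ p q : Fin n, k ≤ (p : ℕ) → (q : ℕ) < k → (A ^ (m + 1)) p q = 0 := by
    intro m
    induction m with
    | zero => simpa using hblock
    | succ m ih =>
      intro p q hp hq
      rw [pow_succ, Matrix.mul_apply]
      refine Finset.sum_eq_zero fun l _ => ?_
      rcases lt_or_ge (l : ℕ) k with hl | hl
      · rw [ih p l hp hl, zero_mul]
      · rw [hblock l q hl hq, mul_zero]
  -- entry formula
  have entry : ∀ (e : Fin n → ℝ), (S * Matrix.diagonal e * S⁻¹) i j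
      = ∑ l, (S i l * S⁻¹ l j) * e l := by
    intro e
    rw [Matrix.mul_apply]
    refine Finset.sum_congr rfl fun l _ => ?_
    rw [Matrix.mul_diagonal]
    ring
  have hint : ∀ m : ℕ, ∑ l, (S i l * S⁻¹ l j) * d l ^ (m + 1) = 0 := by
    intro m
    have := hblockpow m i j hi hj
    rw [hpow m, Matrix.diagonal_pow] at this
    rw [← entry (fun l => d l ^ (m + 1))]
    exact this
  have := exp_vanish (fun l => S i l * S⁻¹ l j) d hd hint hα
  rw [contPow, entry (fun l => d l ^ α)]
  exact this
end
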